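/- arXiv:2206.14023 — 3 statements merged into one kernel-verified Lean document; each statement's English description precedes it below -/
import Mathlib

section
/- For every positive integer k and every partition λ, the k-Petrie number pet_k(λ), defined as the determinant det[χ(0 ≤ λ_i - i + j < k)]_{i,j=1}^{ℓ(λ)}, lies in {-1, 0, 1}. -/
open scoped Classical

namespace Petrie

lemma sign_mul_mem (t : ℕ) (d : ℤ) (hd : d ∈ ({-1, 0, 1} : Set ℤ)) :
    (-1:ℤ)^t * d ∈ ({-1, 0, 1} : Set ℤ) := by
  rcases neg_one_pow_eq_or ℤ t with hp | hp <;>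
    simp only [Set.mem_insert_iff, Set.mem_singleton_iff] at hd ⊢ <;>
    rcases hd with h | h | h <;> rw [hp, h] <;> norm_num

lemma interval_det_mem : ∀ (n : ℕ) (a b : Fin n → ℤ),
    Matrix.det (Matrix.of fun i j : Fin n =>
      if a i ≤ (j:ℕ) ∧ ((j:ℕ):ℤ) < b i then (1:ℤ) else 0) ∈ ({-1, 0, 1} : Set ℤ) := by
  intro n
  induction n with
  | zero => intro a b; simp [Matrix.det_fin_zero]
  | succ m ih =>
    intro a b
    set M : Matrix (Fin (m+1)) (Fin (m+1)) ℤ :=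
      Matrix.of fun i j : Fin (m+1) =>
        if a i ≤ (j:ℕ) ∧ ((j:ℕ):ℤ) < b i then (1:ℤ) else 0 with hM
    by_cases hex : ∃ i : Fin (m+1), a i ≤ 0 ∧ 0 < b i
    · obtain ⟨i0, hi0, hmin⟩ := Finset.exists_min_image
        (Finset.univ.filter (fun i : Fin (m+1) => a i ≤ 0 ∧ 0 < b i)) b
        (by obtain ⟨i, hi⟩ := hex; exact ⟨i, Finset.mem_filter.mpr ⟨Finset.mem_univ _, hi⟩⟩)
      have hPi0 : a i0 ≤ 0 ∧ 0 < b i0 := (Finset.mem_filter.mp hi0).2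
      have hminb : ∀ i : Fin (m+1), a i ≤ 0 → 0 < b i → b i0 ≤ b i := by
        intro i h1 h2
        exact hmin i (Finset.mem_filter.mpr ⟨Finset.mem_univ _, h1, h2⟩)
      clear hmin hi0
      set a' : Fin (m+1) → ℤ := fun i =>
        if (a i ≤ 0 ∧ 0 < b i) ∧ i ≠ i0 then b i0 else a i with ha'
      have ha'i0 : a' i0 = a i0 := by simp [ha']
      set M' : Matrix (Fin (m+1)) (Fin (m+1)) ℤ :=
        Matrix.of fun i j : Fin (m+1) =>
          if a' i ≤ (j:ℕ) ∧ ((j:ℕ):ℤ) < b i then (1:ℤ) else 0 with hM'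
      have hdet : Matrix.det M = Matrix.det M' := by
        apply Matrix.det_eq_of_forall_row_eq_smul_add_const
          (fun i => if (a i ≤ 0 ∧ 0 < b i) ∧ i ≠ i0 then (1:ℤ) else 0) i0
        · simp
        · intro i j
          by_cases hc : (a i ≤ 0 ∧ 0 < b i) ∧ i ≠ i0
          · have h1 : a' i = b i0 := by simp [ha', hc]
            have hb : b i0 ≤ b i := hminb i hc.1.1 hc.1.2
            have hj : (0:ℤ) ≤ ((j:ℕ):ℤ) := Int.ofNat_nonneg _
            have hc1 := hc.1.1
            have hc2 := hc.1.2
            have hb0 := hPi0.2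
            simp only [hM, hM', Matrix.of_apply, if_pos hc, h1, ha'i0, one_mul]
            split_ifs <;> omega
          · simp only [hM, hM', Matrix.of_apply, if_neg hc, zero_mul, add_zero]
            have : a' i = a i := by simp [ha', hc]
            rw [this]
      rw [hdet, Matrix.det_succ_column_zero]
      have hcol : ∀ i : Fin (m+1), M' i 0 = if i = i0 then 1 else 0 := by
        intro i
        by_cases hii : i = i0
        · rw [if_pos hii]
          subst hii
          simp only [hM', Matrix.of_apply, ha'i0]
          rw [if_pos]
          simpa using hPi0
        · rw [if_neg hii]
          by_cases hP : a i ≤ 0 ∧ 0 < b i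
          · have h1 : a' i = b i0 := by simp [ha', hP, hii]
            simp only [hM', Matrix.of_apply, h1]
            rw [if_neg]
            have hb0 := hPi0.2
            simp only [Fin.val_zero, Nat.cast_zero]
            omega
          · have h1 : a' i = a i := by simp [ha', hP]
            simp only [hM', Matrix.of_apply, h1]
            rw [if_neg]
            simpa using hP
      rw [Finset.sum_eq_single i0]
      · rw [hcol i0, if_pos rfl, mul_one]
        have hres := ih (fun i : Fin m => a' (i0.succAbove i) - 1)
          (fun i : Fin m => b (i0.succAbove i) - 1)
        have heq : (M'.submatrix i0.succAbove Fin.succ) =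
            Matrix.of fun i j : Fin m =>
              if (a' (i0.succAbove i) - 1) ≤ (j:ℕ) ∧ ((j:ℕ):ℤ) < b (i0.succAbove i) - 1
              then (1:ℤ) else 0 := by
          ext i j
          simp only [Matrix.submatrix_apply, hM', Matrix.of_apply]
          have hs : ((Fin.succ j : Fin (m+1)) : ℕ) = (j:ℕ) + 1 := rfl
          rw [hs]
          push_cast
          split_ifs <;> omega
        rw [heq]
        exact sign_mul_mem _ _ hres
      · intro i _ hii
        rw [hcol i, if_neg hii]; ring
      · intro h; exact absurd (Finset.mem_univ i0) h
    · push_neg at hex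
      right; left
      apply Matrix.det_eq_zero_of_column_eq_zero 0
      intro i
      simp only [hM, Matrix.of_apply]
      rw [if_neg]
      have := hex i
      simp only [Fin.val_zero, Nat.cast_zero]
      omega


/-- An integer partition, encoded as a weakly decreasing, eventually zero
function `ℕ → ℕ` (0-indexed parts: `parts i` is the `(i+1)`-st part). -/
structure Partition where
  parts : ℕ → ℕ
  antitone : ∀ ⦃i j : ℕ⦄, i ≤ j → parts j ≤ parts i
  fin_supp : ∃ N, ∀ i, N ≤ i → parts i = 0

/-- The size `|λ|` of a partition. -/
noncomputable def psize (l : Partition) : ℕ := ∑ᶠ i, l.parts i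

/-- The number of (nonzero) parts of a partition. -/
noncomputable def length (l : Partition) : ℕ := sInf {i | l.parts i = 0}

/-- The partition whose parts are given by a weakly decreasing list `L`
(of its nonzero entries, possibly padded by zeros). -/
noncomputable def ofList (L : List ℕ) : Partition where
  parts := fun i => (L.drop i).foldr max 0
  antitone := by
    have step : ∀ (M : List ℕ) (i : ℕ),
        (M.drop (i+1)).foldr max 0 ≤ (M.drop i).foldr max 0 := by
      intro M
      induction M with
      | nil => intro i; simp
      | cons a t ih =>
        intro i
        cases i with
        | zero =>
          simp only [List.drop_succ_cons, List.drop_zero, List.foldr_cons]; exact le_max_right a (t.foldr max 0)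
        | succ n => simpa using ih n
    intro i j hij
    induction j, hij using Nat.le_induction with
    | base => exact le_rfl
    | succ n hn ih => exact (step L n).trans ih
  fin_supp := ⟨L.length, by intro i hi; simp [List.drop_eq_nil_of_le hi]⟩

/-- The conjugate (transpose) partition. -/
noncomputable def conj (l : Partition) : Partition where
  parts := fun i => sInf {n | l.parts n ≤ i}
  antitone := by
    intro i j hij
    obtain ⟨N, hN⟩ := l.fin_supp
    refine csInf_le_csInf (OrderBot.bddBelow _) ⟨N, ?_⟩ ?_
    · simp [hN N le_rfl]
    · intro n hn
      exact le_trans hn hij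
  fin_supp := by
    refine ⟨l.parts 0, fun i hi => ?_⟩
    exact Nat.sInf_eq_zero.mpr (Or.inl (le_trans (l.antitone (Nat.zero_le 0)) hi))

/-- The `k`-Petrie number `pet_k(λ) = det[χ(0 ≤ λ_i - i + j < k)]_{i,j=1}^{ℓ(λ)}`. -/
noncomputable def pet (k : ℕ) (l : Partition) : ℤ :=
  Matrix.det (Matrix.of fun i j : Fin (length l) =>
    if (0:ℤ) ≤ (l.parts i : ℤ) - (i:ℕ) + (j:ℕ) ∧ (l.parts i : ℤ) - (i:ℕ) + (j:ℕ) < k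
    then 1 else 0)

/-- The cells of the skew diagram `λ/μ` (rows and columns 0-indexed). -/
def cells (la mu : Partition) : Set (ℕ × ℕ) :=
  {c | mu.parts c.1 ≤ c.2 ∧ c.2 < la.parts c.1}

/-- Rookwise adjacency of two cells. -/
def Adj (c d : ℕ × ℕ) : Prop :=
  (c.1 = d.1 ∧ (c.2 + 1 = d.2 ∨ d.2 + 1 = c.2)) ∨
  (c.2 = d.2 ∧ (c.1 + 1 = d.1 ∨ d.1 + 1 = c.1))

/-- `λ/μ` is a rim hook (border strip) of size `k`: `μ ⊆ λ`, the skew diagram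
has `k` cells, is rookwise connected, and contains no 2×2 square. -/
def IsRimHook (la mu : Partition) (k : ℕ) : Prop :=
  (∀ i, mu.parts i ≤ la.parts i) ∧
  (∑ᶠ i, (la.parts i - mu.parts i)) = k ∧
  (∀ c ∈ cells la mu, ∀ d ∈ cells la mu,
    Relation.ReflTransGen (fun a b => a ∈ cells la mu ∧ b ∈ cells la mu ∧ Adj a b) c d) ∧
  ¬ ∃ i j : ℕ, (i, j) ∈ cells la mu ∧ (i+1, j) ∈ cells la mu ∧
      (i, j+1) ∈ cells la mu ∧ (i+1, j+1) ∈ cells la mu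

/-- The height of a skew shape `λ/μ`: one less than its number of rows. -/
noncomputable def height (la mu : Partition) : ℕ :=
  Set.ncard {i | mu.parts i < la.parts i} - 1

/-- The number of columns of the skew diagram `λ/μ`. -/
noncomputable def cols (la mu : Partition) : ℕ :=
  Set.ncard {j | ∃ i, (i, j) ∈ cells la mu}

/-- `c` is the `k`-core of `λ`: it is obtained from `λ` by successively removing
rim hooks of size `k`, and no further rim hook of size `k` can be removed. -/
def IsCore (k : ℕ) (la c : Partition) : Prop :=
  Relation.ReflTransGen (fun a b => IsRimHook a b k) la c ∧ ∀ b, ¬ IsRimHook c b k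

/-- Dominance order: `Dominates μ λ` means `λ ⊴ μ`. -/
def Dominates (mu la : Partition) : Prop :=
  ∀ r, ∑ i ∈ Finset.range r, la.parts i ≤ ∑ i ∈ Finset.range r, mu.parts i

/-! ### Symmetric functions, realized as formal power series in countably
many variables `x_0, x_1, x_2, …`. -/

/-- The ring of formal power series in the variables `x_i`, `i : ℕ`. -/
abbrev SymFn := MvPowerSeries ℕ ℤ

/-- The total degree of an exponent vector. -/
noncomputable def degree (d : ℕ →₀ ℕ) : ℕ := d.sum fun _ e => e

/-- The complete homogeneous symmetric function `h_m`. -/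
noncomputable def hfun (m : ℕ) : SymFn := fun d => if degree d = m then 1 else 0

/-- `h_n` for an integer index (`0` for negative `n`). -/
noncomputable def hz (n : ℤ) : SymFn := if 0 ≤ n then hfun n.toNat else 0

/-- The elementary symmetric function `e_m`. -/
noncomputable def esymmF (m : ℕ) : SymFn :=
  fun d => if degree d = m ∧ ∀ i, d i ≤ 1 then 1 else 0

/-- The power sum symmetric function `p_n = Σ_i x_i^n`. -/
noncomputable def psumF (n : ℕ) : SymFn :=
  fun d => if ∃ i, d = Finsupp.single i n then 1 else 0

/-- The Petrie symmetric function `G(k,m)`, i.e. the degree-`m` part of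
`Π_i (1 + x_i + x_i^2 + ⋯ + x_i^{k-1})`. -/
noncomputable def G (k m : ℕ) : SymFn :=
  fun d => if degree d = m ∧ ∀ i, d i < k then 1 else 0

/-- The monomial symmetric function `m_λ`. -/
noncomputable def msym (l : Partition) : SymFn :=
  fun d => if Multiset.map (fun i => d i) d.support.val =
      Multiset.map l.parts (Multiset.range (length l)) then 1 else 0

/-- The Schur function `s_λ`, via the Jacobi–Trudi determinant
`s_λ = det[h_{λ_i - i + j}]_{i,j=1}^{ℓ(λ)}`. -/
noncomputable def schur (l : Partition) : SymFn :=
  Matrix.det (Matrix.of fun i j : Fin (length l) =>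
    hz ((l.parts i : ℤ) - (i:ℕ) + (j:ℕ)))

/-- The representative in `{1, …, k}` of `x` modulo `k`. -/
noncomputable def resid (k : ℕ) (x : ℤ) : ℤ := if x % (k:ℤ) = 0 then (k:ℤ) else x % (k:ℤ)

/-- `β_i = λᶜ_i - i` (1-indexed `i`). -/
noncomputable def betaSeq (l : Partition) (i : ℕ) : ℤ := ((conj l).parts (i-1) : ℤ) - (i:ℤ)

/-- `γ_i ∈ {1, …, k}`, `γ_i ≡ λᶜ_i - i (mod k)` (1-indexed `i`). -/
noncomputable def gammaSeq (k : ℕ) (l : Partition) (i : ℕ) : ℤ := resid k (betaSeq l i)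

/-- The number of non-inversions of the sequence `γ_1, …, γ_{k-1}`. -/
noncomputable def ninv (k : ℕ) (g : ℕ → ℤ) : ℕ :=
  (((Finset.Icc 1 (k-1)) ×ˢ (Finset.Icc 1 (k-1))).filter
    (fun p => p.1 < p.2 ∧ g p.1 < g p.2)).card

/-- For every positive integer `k` and every partition `λ`,
the `k`-Petrie number lies in `{-1, 0, 1}`. -/
theorem petrie_number_mem (k : ℕ) (hk : 1 ≤ k) (l : Partition) :
    pet k l ∈ ({-1, 0, 1} : Set ℤ) := by
  have h := interval_det_mem (length l)
    (fun i : Fin (length l) => ((i:ℕ):ℤ) - (l.parts i : ℤ))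
    (fun i : Fin (length l) => ((i:ℕ):ℤ) - (l.parts i : ℤ) + k)
  have heq : pet k l = Matrix.det (Matrix.of fun i j : Fin (length l) =>
      if (((i:ℕ):ℤ) - (l.parts i : ℤ)) ≤ (j:ℕ) ∧
        ((j:ℕ):ℤ) < ((i:ℕ):ℤ) - (l.parts i : ℤ) + k then (1:ℤ) else 0) := by
    unfold pet
    congr 1
    ext i j
    simp only [Matrix.of_apply]
    split_ifs <;> omega
  rw [heq]
  exact h

end Petrie
end

section
/- Let k ≥ 1 and let λ be a partition with λ_1 < k. If the k-core of λ has more than one part, then pet_k(λ) = 0. -/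
open scoped Classical

namespace Petrie

/-! ### Auxiliary development for Statement 5 -/

/-- `β_i = λ_i - i` (0-indexed), the beta sequence of a partition. -/
noncomputable def bt (p : Partition) (i : ℕ) : ℤ := (p.parts i : ℤ) - i

lemma bt_strictAnti (p : Partition) : StrictAnti (bt p) := by
  intro i j hij
  have := p.antitone (le_of_lt hij)
  unfold bt
  have : (p.parts j : ℤ) ≤ p.parts i := by exact_mod_cast this
  omega

lemma bt_le_head (p : Partition) (i : ℕ) : bt p i ≤ (p.parts 0 : ℤ) := by
  have := p.antitone (Nat.zero_le i)
  unfold bt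
  have : (p.parts i : ℤ) ≤ p.parts 0 := by exact_mod_cast this
  omega

lemma parts_eq_zero_of_length_le (p : Partition) {i : ℕ} (hi : length p ≤ i) :
    p.parts i = 0 := by
  obtain ⟨N, hN⟩ := p.fin_supp
  have hne : {i | p.parts i = 0}.Nonempty := ⟨N, hN N le_rfl⟩
  have h0 : p.parts (length p) = 0 := Nat.sInf_mem hne
  exact Nat.le_zero.mp (h0 ▸ p.antitone hi)

lemma parts_ne_zero_of_lt_length (p : Partition) {i : ℕ} (hi : i < length p) :
    p.parts i ≠ 0 := fun h => Nat.notMem_of_lt_sInf hi h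

/-- The finite set of indices whose beta number is `≥ w` and `≡ t (mod k)`. -/
noncomputable def cF (k : ℕ) (t w : ℤ) (p : Partition) : Finset ℕ :=
  (Finset.range ((p.parts 0 + 1 - w).toNat)).filter
    (fun i => w ≤ bt p i ∧ bt p i ≡ t [ZMOD (k : ℤ)])

lemma mem_cF {k : ℕ} {t w : ℤ} {p : Partition} {i : ℕ} :
    i ∈ cF k t w p ↔ w ≤ bt p i ∧ bt p i ≡ t [ZMOD (k : ℤ)] := by
  constructor
  · intro h; exact (Finset.mem_filter.mp h).2
  · intro h
    refine Finset.mem_filter.mpr ⟨Finset.mem_range.mpr ?_, h⟩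
    have h1 : (p.parts i : ℤ) ≤ p.parts 0 := by exact_mod_cast p.antitone (Nat.zero_le i)
    have h2 := h.1
    unfold bt at h2
    omega

/-- Telescoping sum. -/
lemma tele (B : ℕ → ℤ) (r : ℕ) : ∀ s, r ≤ s →
    ∑ i ∈ Finset.Ico r s, (B i - B (i+1)) = B r - B s := by
  intro s hs
  induction s, hs using Nat.le_induction with
  | base => simp
  | succ n hn ih =>
    rw [Finset.sum_Ico_succ_top hn, ih]; ring

/-- Structure of a rim hook: the changed rows form an interval `[r,s]`,
`mu` rows in `[r,s)` are `la`'s next row minus one, and the beta number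
at `r` drops by `k`. -/

lemma adj_symm : Symmetric Adj := by
  intro a b h
  rcases h with ⟨h1, h2⟩ | ⟨h1, h2⟩
  · exact Or.inl ⟨h1.symm, h2.symm⟩
  · exact Or.inr ⟨h1.symm, h2.symm⟩

lemma adj_row_le {a b : ℕ × ℕ} (h : Adj a b) : b.1 ≤ a.1 + 1 ∧ a.1 ≤ b.1 + 1 := by
  rcases h with ⟨h1, -⟩ | ⟨-, h2 | h2⟩ <;> omega

/-- Along a rookwise path, every intermediate row contains a cell. -/
lemma path_row {la mu : Partition} {c d : ℕ × ℕ}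
    (h : Relation.ReflTransGen
      (fun a b => a ∈ cells la mu ∧ b ∈ cells la mu ∧ Adj a b) c d)
    (hc : c ∈ cells la mu) :
    ∀ m, c.1 ≤ m → m ≤ d.1 → ∃ j, (m, j) ∈ cells la mu := by
  induction h with
  | refl =>
    intro m hm1 hm2
    have hm : m = c.1 := le_antisymm hm2 hm1
    exact ⟨c.2, by rwa [hm, Prod.mk.eta]⟩
  | @tail b d hab hstep ih =>
    intro m hm1 hm2
    obtain ⟨hbc, hdc, hadj⟩ := hstep
    have hrow := adj_row_le hadj
    by_cases hmb : m ≤ b.1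
    · exact ih m hm1 hmb
    · have hm : m = d.1 := by omega
      exact ⟨d.2, by rwa [hm, Prod.mk.eta]⟩

/-- Along a rookwise path crossing from row `≤ i` to row `> i`, there is a
vertical domino at rows `i, i+1`. -/
lemma path_cross {la mu : Partition} {i : ℕ} {c d : ℕ × ℕ}
    (h : Relation.ReflTransGen
      (fun a b => a ∈ cells la mu ∧ b ∈ cells la mu ∧ Adj a b) c d)
    (hci : c.1 ≤ i) (hdi : i < d.1) :
    ∃ j, (i, j) ∈ cells la mu ∧ (i+1, j) ∈ cells la mu := by
  induction h with
  | refl => omega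
  | @tail b d hab hstep ih =>
    obtain ⟨hbc, hdc, hadj⟩ := hstep
    have hrow := adj_row_le hadj
    by_cases hbi : i < b.1
    · exact ih hbi
    · have hb1 : b.1 = i ∨ d.1 = i + 1 := by omega
      rcases hadj with ⟨h1, -⟩ | ⟨h1, -⟩
      · omega
      · refine ⟨b.2, ?_, ?_⟩
        · have : (i, b.2) = b := by
            have : b.1 = i := by omega
            rw [← this, Prod.mk.eta]
          rwa [this]
        · have : (i+1, b.2) = d := by
            have hd1 : d.1 = i + 1 := by omega
            rw [h1, ← hd1, Prod.mk.eta]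
          rwa [this]

lemma mem_cells_iff {la mu : Partition} {i j : ℕ} :
    (i, j) ∈ cells la mu ↔ mu.parts i ≤ j ∧ j < la.parts i := Iff.rfl

lemma rimhook_struct {k : ℕ} (hk : 1 ≤ k) {la mu : Partition}
    (h : IsRimHook la mu k) :
    ∃ r s : ℕ, r ≤ s ∧
      (∀ i, i < r ∨ s < i → mu.parts i = la.parts i) ∧
      (∀ i, r ≤ i → i < s → bt mu i = bt la (i+1)) ∧
      bt mu s = bt la r - k := by
  obtain ⟨hsub, hsum, hconn, hno22⟩ := h
  classical
  set D := {i : ℕ | mu.parts i ≠ la.parts i} with hD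
  have hDsub : ∀ i ∈ D, i < length la := by
    intro i hi
    by_contra hcon
    push_neg at hcon
    have h0 : la.parts i = 0 := parts_eq_zero_of_length_le la hcon
    exact hi (by have := hsub i; omega)
  have hDne : D.Nonempty := by
    by_contra hcon
    rw [Set.not_nonempty_iff_eq_empty] at hcon
    have hzero : ∀ i, la.parts i - mu.parts i = 0 := by
      intro i
      have : mu.parts i = la.parts i := by
        by_contra hne
        exact absurd (hD ▸ hcon) (by simp [Set.eq_empty_iff_forall_notMem]; exact ⟨i, hne⟩)
      omega
    have : (∑ᶠ i, (la.parts i - mu.parts i)) = 0 := by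
      have : (fun i => la.parts i - mu.parts i) = fun _ => 0 := funext hzero
      rw [this]; exact finsum_zero
    omega
  set r := sInf D with hr
  have hrD : r ∈ D := Nat.sInf_mem hDne
  have hbdd : BddAbove D := ⟨length la, fun i hi => le_of_lt (hDsub i hi)⟩
  set s := sSup D with hs
  have hsD : s ∈ D := Nat.sSup_mem hDne hbdd
  have hrle : ∀ i ∈ D, r ≤ i := fun i hi => Nat.sInf_le hi
  have hsle : ∀ i ∈ D, i ≤ s := fun i hi => le_csSup hbdd hi
  have hrs : r ≤ s := hrle s hsD
  have hout : ∀ i, i < r ∨ s < i → mu.parts i = la.parts i := by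
    intro i hi
    by_contra hne
    have hiD : i ∈ D := hne
    rcases hi with h | h
    · exact absurd (hrle i hiD) (by omega)
    · exact absurd (hsle i hiD) (by omega)
  have hlt : ∀ i ∈ D, mu.parts i < la.parts i := fun i hi =>
    lt_of_le_of_ne (hsub i) hi
  have hcellr : (r, mu.parts r) ∈ cells la mu := ⟨le_rfl, hlt r hrD⟩
  have hcells : (s, mu.parts s) ∈ cells la mu := ⟨le_rfl, hlt s hsD⟩
  have hpath := hconn _ hcellr _ hcells
  -- the changed rows form an interval
  have hint : ∀ i, r ≤ i → i ≤ s → i ∈ D := by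
    intro i h1 h2
    obtain ⟨j, hj⟩ := path_row hpath hcellr i h1 h2
    rw [mem_cells_iff] at hj
    intro hcon
    rw [hcon] at hj
    omega
  -- middle rows
  have hmid : ∀ i, r ≤ i → i < s → mu.parts i + 1 = la.parts (i+1) := by
    intro i h1 h2
    obtain ⟨j, hj1, hj2⟩ := path_cross hpath (by exact h1) (by omega)
    rw [mem_cells_iff] at hj1 hj2
    have hle : mu.parts i + 1 ≤ la.parts (i+1) := by omega
    by_contra hne
    have hlt2 : mu.parts i + 1 < la.parts (i+1) := by omega
    have hmu1 : mu.parts (i+1) ≤ mu.parts i := mu.antitone (Nat.le_succ i)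
    have hla1 : la.parts (i+1) ≤ la.parts i := la.antitone (Nat.le_succ i)
    apply hno22
    exact ⟨i, mu.parts i,
      mem_cells_iff.mpr ⟨le_rfl, hlt i (hint i h1 (by omega))⟩,
      mem_cells_iff.mpr ⟨by omega, by omega⟩,
      mem_cells_iff.mpr ⟨by omega, by omega⟩,
      mem_cells_iff.mpr ⟨by omega, by omega⟩⟩
  have hmidb : ∀ i, r ≤ i → i < s → bt mu i = bt la (i+1) := by
    intro i h1 h2
    have := hmid i h1 h2
    unfold bt
    push_cast
    omega
  refine ⟨r, s, hrs, hout, hmidb, ?_⟩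
  -- the sum computation
  have hsupp : (Function.support fun i => la.parts i - mu.parts i) ⊆
      ↑(Finset.Ico r (s+1)) := by
    intro i hi
    simp only [Function.mem_support] at hi
    simp only [Finset.coe_Ico, Set.mem_Ico]
    by_contra hcon
    push_neg at hcon
    have : mu.parts i = la.parts i := by
      apply hout
      by_cases h : i < r
      · exact Or.inl h
      · push_neg at h; exact Or.inr (by omega)
    omega
  have hsum2 : ∑ i ∈ Finset.Ico r (s+1), (la.parts i - mu.parts i) = k := by
    rw [← finsum_eq_sum_of_support_subset _ hsupp]
    exact hsum
  have hsum3 : ∑ i ∈ Finset.Ico r (s+1), ((la.parts i : ℤ) - mu.parts i) = k := by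
    have := hsum2
    have hcast : ∀ i ∈ Finset.Ico r (s+1), ((la.parts i - mu.parts i : ℕ) : ℤ)
        = (la.parts i : ℤ) - mu.parts i := by
      intro i _
      have := hsub i
      omega
    calc ∑ i ∈ Finset.Ico r (s+1), ((la.parts i : ℤ) - mu.parts i)
        = ∑ i ∈ Finset.Ico r (s+1), ((la.parts i - mu.parts i : ℕ) : ℤ) :=
          (Finset.sum_congr rfl hcast).symm
      _ = ((∑ i ∈ Finset.Ico r (s+1), (la.parts i - mu.parts i) : ℕ) : ℤ) := by
          rw [Nat.cast_sum]
      _ = k := by rw [hsum2]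
  rw [Finset.sum_Ico_succ_top hrs] at hsum3
  have hmid2 : ∑ i ∈ Finset.Ico r s, ((la.parts i : ℤ) - mu.parts i)
      = bt la r - bt la s := by
    have : ∀ i ∈ Finset.Ico r s, ((la.parts i : ℤ) - mu.parts i)
        = bt la i - bt la (i+1) := by
      intro i hi
      simp only [Finset.mem_Ico] at hi
      have := hmidb i hi.1 hi.2
      unfold bt at this ⊢
      omega
    rw [Finset.sum_congr rfl this, tele (bt la) r s hrs]
  rw [hmid2] at hsum3
  unfold bt at hsum3 ⊢
  omega


/-- Rim hook removal does not increase class counts. -/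
lemma cF_card_le_of_rimhook {k : ℕ} (hk : 1 ≤ k) {la mu : Partition}
    (h : IsRimHook la mu k) (t w : ℤ) :
    (cF k t w mu).card ≤ (cF k t w la).card := by
  obtain ⟨r, s, hrs, hout, hmid, hlast⟩ := rimhook_struct hk h
  have hk' : (1:ℤ) ≤ k := by exact_mod_cast hk
  have hbt_out : ∀ i, i < r ∨ s < i → bt mu i = bt la i := by
    intro i hi; unfold bt; rw [hout i hi]
  apply Finset.card_le_card_of_injOn
    (fun i => if i = s then r else if r ≤ i ∧ i < s then i + 1 else i)
  · intro i hi
    simp only [Finset.mem_coe] at hi ⊢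
    rw [mem_cF] at hi
    by_cases hc1 : i = s
    · subst hc1
      have hfi : (if i = i then r else if r ≤ i ∧ i < i then i + 1 else i) = r :=
        if_pos rfl
      rw [hfi, mem_cF]
      refine ⟨by omega, ?_⟩
      have hmod : bt la r ≡ bt mu i [ZMOD (k:ℤ)] := by
        rw [Int.modEq_iff_dvd]
        exact ⟨-1, by omega⟩
      exact hmod.trans hi.2
    · by_cases hc2 : r ≤ i ∧ i < s
      · simp only [if_neg hc1, if_pos hc2]
        rw [mem_cF, ← hmid i hc2.1 hc2.2]
        exact hi
      · simp only [if_neg hc1, if_neg hc2]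
        rw [mem_cF, ← hbt_out i (by omega)]
        exact hi
  · intro a _ b _ hab
    simp only at hab
    split_ifs at hab <;> omega

/-- If no `k`-rim hook can be removed from `c`, then the beta set of `c` is
closed under subtracting `k`. -/
lemma core_closed {k : ℕ} (hk : 1 ≤ k) {c : Partition}
    (hco : ∀ b, ¬ IsRimHook c b k) (r : ℕ) :
    ∃ i, bt c i = bt c r - k := by
  by_contra hno
  push_neg at hno
  have hk' : (1:ℤ) ≤ k := by exact_mod_cast hk
  set x := bt c r with hx
  have hanti : ∀ i j : ℕ, i ≤ j → bt c j ≤ bt c i := fun i j hij =>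
    (bt_strictAnti c).antitone hij
  have hex : ∃ i, bt c i ≤ x - k := by
    refine ⟨(c.parts 0) + k + r, ?_⟩
    have h1 : (c.parts ((c.parts 0) + k + r) : ℤ) ≤ c.parts 0 := by
      exact_mod_cast c.antitone (Nat.zero_le _)
    have h2 : x ≤ (c.parts 0 : ℤ) := bt_le_head c r
    have h3 : -(r:ℤ) ≤ x := by
      rw [hx]; unfold bt; push_cast; omega
    unfold bt
    push_cast
    omega
  classical
  set s' := Nat.find hex with hs'
  have hs'le : bt c s' ≤ x - k := Nat.find_spec hex
  have hs'lt : bt c s' < x - k := lt_of_le_of_ne hs'le (hno s')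
  have hs'pos : 0 < s' := by
    rcases Nat.eq_zero_or_pos s' with h | h
    · exfalso
      rw [h] at hs'le
      have := hanti 0 r (Nat.zero_le r)
      omega
    · exact h
  set s := s' - 1 with hsdef
  have hss' : s + 1 = s' := by omega
  have hs_gt : x - k < bt c s := by
    have h := Nat.find_min hex (show s < s' by omega)
    omega
  have hrs : r ≤ s := by
    by_contra hcon
    push_neg at hcon
    have : s' ≤ r := by omega
    have := hanti s' r this
    omega
  have hs1 : bt c (s+1) < x - k := by rw [hss']; exact hs'lt
  -- key integer facts
  have hy0 : 0 ≤ x - k + s := by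
    have : -(s:ℤ) - 1 ≤ bt c (s+1) := by unfold bt; push_cast; omega
    omega
  have hcs_pos : 1 ≤ c.parts s := by
    have h := hs_gt
    unfold bt at h
    omega
  -- the new partition
  set mp : ℕ → ℕ := fun i =>
    if i < r then c.parts i
    else if i < s then c.parts (i+1) - 1
    else if i = s then (x - k + s).toNat
    else c.parts i with hmp
  have hcpos : ∀ i, r ≤ i → i ≤ s → 1 ≤ c.parts i := by
    intro i h1 h2
    have := c.antitone h2
    omega
  have hmpz : ∀ i, r ≤ i → i < s → (mp i : ℤ) = (c.parts (i+1) : ℤ) - 1 := by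
    intro i h1 h2
    have h3 : ¬ i < r := by omega
    have h4 : 1 ≤ c.parts (i+1) := hcpos (i+1) (by omega) (by omega)
    simp only [hmp, if_neg h3, if_pos h2]
    omega
  have hmps : (mp s : ℤ) = x - k + s := by
    have h3 : ¬ s < r := by omega
    have h4 : ¬ s < s := by omega
    have h5 : mp s = (x - k + s).toNat := by
      simp only [hmp]
      rw [if_neg h3, if_neg h4]
      simp
    rw [h5]
    omega
  have hmpout : ∀ i, i < r ∨ s < i → mp i = c.parts i := by
    intro i hi
    rcases hi with h | h
    · simp only [hmp, if_pos h]
    · have h3 : ¬ i < r := by omega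
      have h4 : ¬ i < s := by omega
      have h5 : ¬ i = s := by omega
      simp only [hmp, if_neg h3, if_neg h4, if_neg h5]
  -- beta facts for mp
  have hbmid : ∀ i, r ≤ i → i < s → (mp i : ℤ) - i = bt c (i+1) := by
    intro i h1 h2
    rw [hmpz i h1 h2]
    unfold bt
    push_cast
    omega
  -- pointwise le
  have hle : ∀ i, mp i ≤ c.parts i := by
    intro i
    by_cases h1 : i < r
    · rw [hmpout i (Or.inl h1)]
    · by_cases h2 : i < s
      · have h3 := hmpz i (by omega) h2
        have h4 : c.parts (i+1) ≤ c.parts i := c.antitone (by omega : i ≤ i + 1)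
        omega
      · by_cases h3 : i = s
        · rw [h3]
          have h5 := hs_gt
          unfold bt at h5
          omega
        · rw [hmpout i (Or.inr (by omega))]
  -- strict on [r, s]
  have hstrict : ∀ i, r ≤ i → i ≤ s → mp i < c.parts i := by
    intro i h1 h2
    by_cases h3 : i < s
    · have h4 := hmpz i h1 h3
      have h5 : c.parts (i+1) ≤ c.parts i := c.antitone (by omega : i ≤ i + 1)
      have h6 := hcpos (i+1) (by omega) (by omega)
      omega
    · have h4 : i = s := by omega
      rw [h4]
      have h5 := hs_gt
      unfold bt at h5
      omega
  -- antitone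
  have hantitone : ∀ i, mp (i+1) ≤ mp i := by
    intro i
    by_cases h1 : i + 1 < r
    · rw [hmpout i (Or.inl (by omega)), hmpout (i+1) (Or.inl h1)]
      exact c.antitone (by omega : i ≤ i + 1)
    · by_cases h2 : i + 1 = r
      · rw [hmpout i (Or.inl (by omega))]
        have h3 : mp (i+1) ≤ c.parts (i+1) := hle (i+1)
        have h4 : c.parts (i+1) ≤ c.parts i := c.antitone (by omega : i ≤ i + 1)
        omega
      · have hri : r ≤ i := by omega
        by_cases h3 : i + 1 < s
        · have h7 := hmpz i hri (by omega)
          have h8 := hmpz (i+1) (by omega) h3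
          have h9 : c.parts (i+1+1) ≤ c.parts (i+1) :=
            c.antitone (by omega : i + 1 ≤ i + 1 + 1)
          omega
        · by_cases h4 : i + 1 = s
          · have h7b := hmpz i hri (by omega)
            have h8 : (mp (i+1) : ℤ) = x - k + ((i:ℤ)+1) := by
              rw [h4]
              push_cast [hmps]
              omega
            have h9 : x - k < (c.parts (i+1) : ℤ) - ((i:ℤ)+1) := by
              have h10 := hs_gt
              unfold bt at h10
              rw [h4]
              push_cast
              omega
            omega
          · by_cases h5 : i = s
            · rw [h5]
              have h8 : mp (s+1) = c.parts (s+1) := hmpout (s+1) (Or.inr (by omega))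
              have h9 := hs1
              unfold bt at h9
              omega
            · rw [hmpout i (Or.inr (by omega)), hmpout (i+1) (Or.inr (by omega))]
              exact c.antitone (by omega : i ≤ i + 1)
  set mu : Partition := ⟨mp, antitone_nat_of_succ_le hantitone, by
    obtain ⟨N, hN⟩ := c.fin_supp
    refine ⟨N + s + 1, fun i hi => ?_⟩
    rw [hmpout i (Or.inr (by omega))]
    exact hN i (by omega)⟩ with hmu
  have hmuparts : mu.parts = mp := rfl
  -- cells characterization
  have hcell : ∀ i j : ℕ, (i, j) ∈ cells c mu ↔
      (r ≤ i ∧ i ≤ s ∧ mp i ≤ j ∧ j < c.parts i) := by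
    intro i j
    rw [mem_cells_iff, hmuparts]
    constructor
    · rintro ⟨h1, h2⟩
      by_cases h3 : r ≤ i ∧ i ≤ s
      · exact ⟨h3.1, h3.2, h1, h2⟩
      · exfalso
        have : mp i = c.parts i := by
          apply hmpout
          omega
        omega
    · rintro ⟨h1, h2, h3, h4⟩
      exact ⟨h3, h4⟩
  -- no 2x2
  have hno22 : ¬ ∃ i j : ℕ, (i, j) ∈ cells c mu ∧ (i+1, j) ∈ cells c mu ∧
      (i, j+1) ∈ cells c mu ∧ (i+1, j+1) ∈ cells c mu := by
    rintro ⟨i, j, h1, h2, h3, h4⟩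
    rw [hcell] at h1 h2 h4
    obtain ⟨ha, hb, hc2, hd⟩ := h1
    obtain ⟨ha2, hb2, hc3, hd2⟩ := h2
    obtain ⟨ha4, hb4, hc4, hd4⟩ := h4
    -- i < s, so mp i = c_{i+1} - 1 ; but j ≥ mp i and j + 1 < c_{i+1}
    have hlt2 : i < s := by omega
    have := hmpz i ha hlt2
    omega
  -- connectivity
  set R : ℕ × ℕ → ℕ × ℕ → Prop :=
    fun a b => a ∈ cells c mu ∧ b ∈ cells c mu ∧ Adj a b with hR
  have hRsymm : Symmetric R := by
    intro a b ⟨h1, h2, h3⟩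
    exact ⟨h2, h1, adj_symm h3⟩
  have hdown : ∀ n : ℕ, ∀ p : ℕ × ℕ, p ∈ cells c mu → (s - p.1) + p.2 ≤ n →
      Relation.ReflTransGen R p (s, mp s) := by
    intro n
    induction n with
    | zero =>
      intro p hp hn
      obtain ⟨i, j⟩ := p
      rw [hcell] at hp
      obtain ⟨h1, h2, h3, h4⟩ := hp
      simp only at hn
      have hi : i = s := by omega
      have hj : j = 0 := by omega
      have hmz : mp s = 0 := by
        rw [← hi]
        omega
      rw [hi, hj, hmz]
    | succ n ih =>
      intro p hp hn
      obtain ⟨i, j⟩ := p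
      rw [hcell] at hp
      obtain ⟨h1, h2, h3, h4⟩ := hp
      simp only at hn
      by_cases hj : mp i < j
      · -- horizontal step to (i, j-1)
        have hmem : (i, j-1) ∈ cells c mu := (hcell i (j-1)).mpr ⟨h1, h2, by omega, by omega⟩
        refine Relation.ReflTransGen.head ?_ (ih (i, j-1) hmem (by simp only; omega))
        refine ⟨(hcell i j).mpr ⟨h1, h2, h3, h4⟩, hmem, Or.inl ⟨rfl, Or.inr (by omega)⟩⟩
      · -- j = mp i
        have hjeq : j = mp i := by omega
        by_cases hi : i = s
        · subst hi hjeq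
          exact Relation.ReflTransGen.refl
        · -- vertical step to (i+1, j)
          have his : i < s := by omega
          have hcnext : 1 ≤ c.parts (i+1) := hcpos (i+1) (by omega) (by omega)
          have hmpi := hmpz i h1 his
          have hnext_lt : mp (i+1) < c.parts (i+1) := hstrict (i+1) (by omega) (by omega)
          have hmem : (i+1, j) ∈ cells c mu := by
            rw [hcell]
            refine ⟨by omega, by omega, ?_, ?_⟩
            · -- mp (i+1) ≤ j = mp i = c_{i+1} - 1
              omega
            · omega
          refine Relation.ReflTransGen.head ?_ (ih (i+1, j) hmem (by simp only; omega))
          exact ⟨(hcell i j).mpr ⟨h1, h2, h3, h4⟩, hmem, Or.inr ⟨rfl, Or.inl rfl⟩⟩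
  have hconn : ∀ p ∈ cells c mu, ∀ q ∈ cells c mu, Relation.ReflTransGen R p q := by
    intro p hp q hq
    have h1 := hdown ((s - p.1) + p.2) p hp le_rfl
    have h2 := hdown ((s - q.1) + q.2) q hq le_rfl
    exact h1.trans ((@Relation.ReflTransGen.symmetric _ R ⟨fun a b h => hRsymm h⟩).symm _ _ h2)
  -- sum
  have hsum : (∑ᶠ i, (c.parts i - mu.parts i)) = k := by
    rw [hmuparts]
    have hsupp : (Function.support fun i => c.parts i - mp i) ⊆
        ↑(Finset.Ico r (s+1)) := by
      intro i hi
      simp only [Function.mem_support] at hi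
      simp only [Finset.coe_Ico, Set.mem_Ico]
      by_contra hcon
      push_neg at hcon
      have : mp i = c.parts i := by
        apply hmpout
        by_cases h : i < r
        · exact Or.inl h
        · push_neg at h; exact Or.inr (by omega)
      omega
    rw [finsum_eq_sum_of_support_subset _ hsupp]
    have hcast : ∀ i ∈ Finset.Ico r (s+1), ((c.parts i - mp i : ℕ) : ℤ)
        = (c.parts i : ℤ) - mp i := by
      intro i hi
      have := hle i
      omega
    have hz : (∑ i ∈ Finset.Ico r (s+1), (c.parts i - mp i) : ℕ) = (k : ℕ) := by
      have hzsum : ∑ i ∈ Finset.Ico r (s+1), ((c.parts i : ℤ) - mp i) = k := by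
        rw [Finset.sum_Ico_succ_top hrs]
        have hbody : ∀ i ∈ Finset.Ico r s, ((c.parts i : ℤ) - mp i)
            = bt c i - bt c (i+1) := by
          intro i hi
          simp only [Finset.mem_Ico] at hi
          rw [hmpz i hi.1 hi.2]
          unfold bt
          push_cast
          omega
        rw [Finset.sum_congr rfl hbody, tele (bt c) r s hrs, hmps]
        unfold bt
        unfold bt at hx
        omega
      have : ((∑ i ∈ Finset.Ico r (s+1), (c.parts i - mp i) : ℕ) : ℤ) = (k : ℤ) := by
        rw [Nat.cast_sum, Finset.sum_congr rfl hcast]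
        exact hzsum
      exact_mod_cast this
    exact hz
  exact hco mu ⟨fun i => hle i, hsum, hconn, hno22⟩


/-- Lower bound on the class count of a partition whose beta set is closed
under subtracting `k`. -/
lemma cF_card_lower {k : ℕ} (hk : 1 ≤ k) {c : Partition}
    (hco : ∀ b, ¬ IsRimHook c b k) (r : ℕ) (w : ℤ) (hw : w ≤ bt c r) :
    ((bt c r - w) / k).toNat + 1 ≤ (cF k (bt c r) w c).card := by
  have hk' : (1:ℤ) ≤ k := by exact_mod_cast hk
  set t := bt c r with ht
  have hcl : ∀ m : ℕ, ∃ i, bt c i = t - m * k := by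
    intro m
    induction m with
    | zero => exact ⟨r, by simp [ht]⟩
    | succ n ih =>
      obtain ⟨i, hi⟩ := ih
      obtain ⟨i', hi'⟩ := core_closed hk hco i
      exact ⟨i', by rw [hi', hi]; push_cast; ring⟩
  set F := ((t - w) / k).toNat with hF
  have hrange : (Finset.range (F + 1)).card = F + 1 := Finset.card_range _
  rw [← hrange]
  apply Finset.card_le_card_of_injOn (fun m => Classical.choose (hcl m))
  · intro m hm
    simp only [Finset.mem_coe] at hm ⊢
    have hspec := Classical.choose_spec (hcl m)
    rw [mem_cF, hspec]
    constructor
    · rw [Finset.mem_range] at hm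
      have hm' : (m : ℤ) ≤ (t - w)/k := by
        have h0 : (0:ℤ) ≤ (t-w)/k := Int.ediv_nonneg (by omega) (by omega)
        omega
      have : (m:ℤ) * k ≤ t - w := by
        rw [← Int.le_ediv_iff_mul_le (by omega : (0:ℤ) < k)]
        exact hm'
      omega
    · have : (k:ℤ) ∣ t - (t - m * k) := ⟨m, by ring⟩
      exact Int.modEq_iff_dvd.mpr this
  · intro m hm n hn hmn
    have h1 := Classical.choose_spec (hcl m)
    have h2 := Classical.choose_spec (hcl n)
    simp only [show Classical.choose (hcl m) = Classical.choose (hcl n) from hmn] at h1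
    rw [h2] at h1
    have : (m:ℤ) * k = n * k := by omega
    have h3 : (m:ℤ) = n := mul_right_cancel₀ (show (k:ℤ) ≠ 0 by omega) this
    exact_mod_cast h3

/-- Upper bound on the class count in the region above `w + k`. -/
lemma cF_card_upper {k : ℕ} (hk : 1 ≤ k) {l : Partition} (hl : (l.parts 0 : ℤ) ≤ k - 1)
    {t : ℤ} (ht0 : 0 ≤ t) (htk : t ≤ k - 1) (w : ℤ) (hw : w ≤ 0) :
    (cF k t (w + k) l).card ≤ ((t - w) / k).toNat := by
  have hk' : (1:ℤ) ≤ k := by exact_mod_cast hk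
  have key : ∀ i ∈ cF k t (w + k) l, ∃ q : ℤ, 0 ≤ q ∧ q + 1 ≤ (t - w)/k ∧
      bt l i = t - k * q := by
    intro i hi
    rw [mem_cF] at hi
    obtain ⟨hge, hmod⟩ := hi
    obtain ⟨q, hq⟩ : (k:ℤ) ∣ (t - bt l i) := Int.ModEq.dvd hmod
    have hble : bt l i ≤ (k:ℤ) - 1 := le_trans (bt_le_head l i) hl
    have hq0 : 0 ≤ q := by
      by_contra hcon
      push_neg at hcon
      have h7 : q ≤ -1 := by omega
      have h8 : (k:ℤ)*q ≤ (k:ℤ)*(-1) := mul_le_mul_of_nonneg_left h7 (by omega)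
      rw [mul_neg_one] at h8
      omega
    refine ⟨q, hq0, ?_, by omega⟩
    rw [Int.le_ediv_iff_mul_le (by omega : (0:ℤ) < k)]
    have : (q+1) * k = k * q + k := by ring
    omega
  rw [← Finset.card_range ((t - w) / (k:ℤ)).toNat]
  apply Finset.card_le_card_of_injOn (fun i => ((t - bt l i)/k).toNat)
  · intro i hi
    obtain ⟨q, hq0, hq1, hq2⟩ := key i hi
    simp only [Finset.mem_coe, Finset.mem_range]
    rw [hq2]
    have : (t - (t - k * q))/k = q := by
      have : t - (t - k*q) = k * q := by ring
      rw [this, Int.mul_ediv_cancel_left _ (by omega : (k:ℤ) ≠ 0)]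
    rw [this]
    omega
  · intro i hi j hj hij
    obtain ⟨q, hq0, hq1, hq2⟩ := key i hi
    obtain ⟨p, hp0, hp1, hp2⟩ := key j hj
    simp only [hq2, hp2] at hij
    have e1 : (t - (t - k * q))/k = q := by
      have : t - (t - k*q) = k * q := by ring
      rw [this, Int.mul_ediv_cancel_left _ (by omega : (k:ℤ) ≠ 0)]
    have e2 : (t - (t - k * p))/k = p := by
      have : t - (t - k*p) = k * p := by ring
      rw [this, Int.mul_ediv_cancel_left _ (by omega : (k:ℤ) ≠ 0)]
    rw [e1, e2] at hij
    have : q = p := by omega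
    apply (bt_strictAnti l).injective
    rw [hq2, hp2, this]

/-- Exactly-one-window-element: combining the bounds. -/
lemma window_exists {k : ℕ} (hk : 1 ≤ k) {l : Partition} (hl : (l.parts 0 : ℤ) ≤ k - 1)
    {t : ℤ} (ht0 : 0 ≤ t) (htk : t ≤ k - 1)
    (hlow : ∀ w : ℤ, w ≤ 0 → ((t - w) / k).toNat + 1 ≤ (cF k t w l).card)
    (w : ℤ) (hw : w ≤ 0) :
    ∃ i, w ≤ bt l i ∧ bt l i < w + k ∧ bt l i ≡ t [ZMOD (k : ℤ)] := by
  by_contra hno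
  push_neg at hno
  have heq : cF k t w l = cF k t (w + k) l := by
    apply Finset.ext
    intro i
    rw [mem_cF, mem_cF]
    constructor
    · rintro ⟨h1, h2⟩
      refine ⟨?_, h2⟩
      rcases lt_or_ge (bt l i) (w + k) with h | h
      · exact absurd h2 (hno i h1 h)
      · exact h
    · rintro ⟨h1, h2⟩; exact ⟨by omega, h2⟩
  have h1 := hlow w hw
  have h2 := cF_card_upper hk hl ht0 htk w hw
  rw [heq] at h1
  omega

lemma window_unique {k : ℕ} (hk : 1 ≤ k) {l : Partition} {t w : ℤ} {i i' : ℕ}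
    (h1 : w ≤ bt l i ∧ bt l i < w + k ∧ bt l i ≡ t [ZMOD (k : ℤ)])
    (h2 : w ≤ bt l i' ∧ bt l i' < w + k ∧ bt l i' ≡ t [ZMOD (k : ℤ)]) : i = i' := by
  have hmod : bt l i ≡ bt l i' [ZMOD (k : ℤ)] := h1.2.2.trans h2.2.2.symm
  have hdvd : (k : ℤ) ∣ (bt l i - bt l i') := Int.ModEq.dvd hmod.symm
  have : bt l i = bt l i' := by
    rcases hdvd with ⟨m, hm⟩
    have h3 := h1.1; have h4 := h1.2.1; have h5 := h2.1; have h6 := h2.2.1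
    have hk' : (1:ℤ) ≤ k := by exact_mod_cast hk
    have hmz : m = 0 := by
      by_contra hm0
      rcases lt_or_gt_of_ne hm0 with hc | hc
      · have h7 : m ≤ -1 := by omega
        have h8 : (k:ℤ)*m ≤ (k:ℤ)*(-1) := mul_le_mul_of_nonneg_left h7 (by omega)
        rw [mul_neg_one] at h8
        omega
      · have h7 : (1:ℤ) ≤ m := by omega
        have h8 : (k:ℤ)*1 ≤ (k:ℤ)*m := mul_le_mul_of_nonneg_left h7 (by omega)
        rw [mul_one] at h8
        omega
    rw [hmz, mul_zero] at hm
    omega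
  exact (bt_strictAnti l).injective this

lemma int_eq_of_modeq_small {k : ℕ} (hk : 1 ≤ k) {a b : ℤ}
    (h : a ≡ b [ZMOD (k:ℤ)]) (h1 : -(k:ℤ) < a - b) (h2 : a - b < k) : a = b := by
  obtain ⟨m, hm⟩ : (k:ℤ) ∣ b - a := Int.ModEq.dvd h
  have hk' : (1:ℤ) ≤ k := by exact_mod_cast hk
  have hmz : m = 0 := by
    by_contra hm0
    rcases lt_or_gt_of_ne hm0 with hcc | hcc
    · have h7 : m ≤ -1 := by omega
      have h8 : (k:ℤ)*m ≤ (k:ℤ)*(-1) := mul_le_mul_of_nonneg_left h7 (by omega)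
      rw [mul_neg_one] at h8
      omega
    · have h7 : (1:ℤ) ≤ m := by omega
      have h8 : (k:ℤ)*1 ≤ (k:ℤ)*m := mul_le_mul_of_nonneg_left h7 (by omega)
      rw [mul_one] at h8
      omega
  rw [hmz, mul_zero] at hm
  omega

lemma chain_parts_le {k : ℕ} {la c : Partition}
    (h : Relation.ReflTransGen (fun a b => IsRimHook a b k) la c) :
    ∀ i, c.parts i ≤ la.parts i := by
  induction h with
  | refl => intro i; exact le_rfl
  | tail hab hstep ih => intro i; exact le_trans (hstep.1 i) (ih i)

lemma chain_cF_le {k : ℕ} (hk : 1 ≤ k) {la c : Partition}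
    (h : Relation.ReflTransGen (fun a b => IsRimHook a b k) la c) (t w : ℤ) :
    (cF k t w c).card ≤ (cF k t w la).card := by
  induction h with
  | refl => exact le_rfl
  | tail hab hstep ih => exact le_trans (cF_card_le_of_rimhook hk hstep t w) ih
/-- if `λ_1 < k` and the `k`-core of `λ` has more than one part,
then `pet_k(λ) = 0`. -/
theorem pet_eq_zero_of_core_long (k : ℕ) (hk : 1 ≤ k) (l : Partition)
    (h1 : l.parts 0 < k) (c : Partition) (hc : IsCore k l c) (hlen : 1 < length c) :
    pet k l = 0 := by
  classical
  obtain ⟨hchain, hcore⟩ := hc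
  have hk' : (1:ℤ) ≤ k := by exact_mod_cast hk
  have hple : ∀ i, c.parts i ≤ l.parts i := chain_parts_le hchain
  have hc1 : 1 ≤ c.parts 1 :=
    Nat.one_le_iff_ne_zero.mpr (parts_ne_zero_of_lt_length c hlen)
  have hc0 : 1 ≤ c.parts 0 := le_trans hc1 (c.antitone (by omega : 0 ≤ 1))
  have hl0 : 1 ≤ l.parts 0 := le_trans hc0 (hple 0)
  have hlenl : 0 < length l := by
    by_contra hcon
    push_neg at hcon
    have := parts_eq_zero_of_length_le l (by omega : length l ≤ 0)
    omega
  have hlpk : (l.parts 0 : ℤ) ≤ (k:ℤ) - 1 := by exact_mod_cast by omega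
  set t₁ := bt c 0 with ht1
  set t₂ := bt c 1 with ht2
  have ht1a : 0 ≤ t₁ := by rw [ht1]; unfold bt; push_cast; omega
  have ht1b : t₁ ≤ (k:ℤ) - 1 := by
    have := hple 0
    rw [ht1]; unfold bt; push_cast; omega
  have ht2a : 0 ≤ t₂ := by rw [ht2]; unfold bt; push_cast; omega
  have ht2b : t₂ ≤ (k:ℤ) - 1 := by
    have h2 := hple 1
    have h3 := l.antitone (by omega : 0 ≤ 1)
    rw [ht2]; unfold bt; push_cast; omega
  have htlt : t₂ < t₁ := bt_strictAnti c (by omega : (0:ℕ) < 1)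
  have htne : ¬ (t₁ ≡ t₂ [ZMOD (k:ℤ)]) := by
    intro hmod
    have := int_eq_of_modeq_small hk hmod (by omega) (by omega)
    omega
  -- both classes meet every window at or below 0
  have hwin : ∀ t : ℤ, 0 ≤ t → t ≤ (k:ℤ) - 1 → (∃ r0 : ℕ, bt c r0 = t) →
      ∀ w : ℤ, w ≤ 0 →
      ∃ i, w ≤ bt l i ∧ bt l i < w + k ∧ bt l i ≡ t [ZMOD (k:ℤ)] := by
    rintro t h0t hkt ⟨r0, hr0⟩ w hw
    refine window_exists hk hlpk h0t hkt ?_ w hw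
    intro w' hw'
    calc ((t - w')/(k:ℤ)).toNat + 1 = ((bt c r0 - w')/(k:ℤ)).toNat + 1 := by rw [hr0]
      _ ≤ (cF k (bt c r0) w' c).card := cF_card_lower hk hcore r0 w' (by omega)
      _ = (cF k t w' c).card := by rw [hr0]
      _ ≤ (cF k t w' l).card := chain_cF_le hk hchain t w'
  have hwin1 := hwin t₁ ht1a ht1b ⟨0, rfl⟩
  have hwin2 := hwin t₂ ht2a ht2b ⟨1, rfl⟩
  -- witnesses are below length l
  have hidx : ∀ (j : Fin (length l)) (i : ℕ), -(j:ℤ) ≤ bt l i → i < length l := by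
    intro j i hi
    by_contra hcon
    push_neg at hcon
    have h0 : l.parts i = 0 := parts_eq_zero_of_length_le l hcon
    have hj : (j:ℕ) < length l := j.2
    unfold bt at hi
    omega
  -- the column sums for a single class
  have key : ∀ t : ℤ,
      (∀ w : ℤ, w ≤ 0 → ∃ i, w ≤ bt l i ∧ bt l i < w + k ∧ bt l i ≡ t [ZMOD (k:ℤ)]) →
      ∀ j : Fin (length l),
      ∑ i : Fin (length l), (if bt l (i:ℕ) ≡ t [ZMOD (k:ℤ)] then (1:ℤ) else 0) *
        (if (0:ℤ) ≤ (l.parts i : ℤ) - ((i:ℕ):ℤ) + ((j:ℕ):ℤ) ∧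
            (l.parts i : ℤ) - ((i:ℕ):ℤ) + ((j:ℕ):ℤ) < k then (1:ℤ) else 0) = 1 := by
    intro t hwint j
    obtain ⟨i₀, hi1, hi2, hi3⟩ := hwint (-(j:ℤ)) (by omega)
    have hi₀lt : i₀ < length l := hidx j i₀ hi1
    set I : Fin (length l) := ⟨i₀, hi₀lt⟩ with hI
    rw [Finset.sum_eq_single I]
    · have hbeq : bt l (I:ℕ) = bt l i₀ := rfl
      rw [if_pos (by rw [hbeq]; exact hi3), if_pos ?_]
      · ring
      · have : (l.parts (I:ℕ) : ℤ) - ((I:ℕ):ℤ) = bt l i₀ := rfl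
        rw [this]
        omega
    · intro b _ hb
      by_cases hb1 : bt l (b:ℕ) ≡ t [ZMOD (k:ℤ)]
      · by_cases hb2 : (0:ℤ) ≤ (l.parts b : ℤ) - ((b:ℕ):ℤ) + ((j:ℕ):ℤ) ∧
            (l.parts b : ℤ) - ((b:ℕ):ℤ) + ((j:ℕ):ℤ) < k
        · exfalso
          have hbb : (l.parts (b:ℕ) : ℤ) - ((b:ℕ):ℤ) = bt l (b:ℕ) := rfl
          rw [hbb] at hb2
          have : (b:ℕ) = i₀ :=
            window_unique hk ⟨by omega, by omega, hb1⟩ ⟨hi1, hi2, hi3⟩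
          apply hb
          exact Fin.ext this
        · rw [if_neg hb2, mul_zero]
      · rw [if_neg hb1, zero_mul]
    · intro h
      exact absurd (Finset.mem_univ I) h
  -- the kernel vector
  unfold pet
  rw [← Matrix.exists_vecMul_eq_zero_iff]
  refine ⟨fun i => (if bt l (i:ℕ) ≡ t₁ [ZMOD (k:ℤ)] then (1:ℤ) else 0) -
      (if bt l (i:ℕ) ≡ t₂ [ZMOD (k:ℤ)] then (1:ℤ) else 0), ?_, ?_⟩
  · -- nonzero
    obtain ⟨i₀, hi1, hi2, hi3⟩ := hwin1 0 le_rfl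
    have hi₀lt : i₀ < length l := by
      by_contra hcon
      push_neg at hcon
      have h0 : l.parts i₀ = 0 := parts_eq_zero_of_length_le l hcon
      unfold bt at hi1
      omega
    intro hcon
    have := congrFun hcon ⟨i₀, hi₀lt⟩
    simp only [Pi.zero_apply] at this
    rw [if_pos hi3, if_neg ?_] at this
    · omega
    · intro hmod
      exact htne (hi3.symm.trans hmod)
  · -- in the kernel
    funext j
    have h1 := key t₁ hwin1 j
    have h2 := key t₂ hwin2 j
    simp only [Matrix.vecMul, dotProduct, Matrix.of_apply, Pi.zero_apply]
    have hexp : ∀ i : Fin (length l),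
        ((if bt l (i:ℕ) ≡ t₁ [ZMOD (k:ℤ)] then (1:ℤ) else 0) -
         (if bt l (i:ℕ) ≡ t₂ [ZMOD (k:ℤ)] then (1:ℤ) else 0)) *
          (if (0:ℤ) ≤ (l.parts i : ℤ) - ((i:ℕ):ℤ) + ((j:ℕ):ℤ) ∧
            (l.parts i : ℤ) - ((i:ℕ):ℤ) + ((j:ℕ):ℤ) < k then (1:ℤ) else 0)
        = (if bt l (i:ℕ) ≡ t₁ [ZMOD (k:ℤ)] then (1:ℤ) else 0) *
          (if (0:ℤ) ≤ (l.parts i : ℤ) - ((i:ℕ):ℤ) + ((j:ℕ):ℤ) ∧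
            (l.parts i : ℤ) - ((i:ℕ):ℤ) + ((j:ℕ):ℤ) < k then (1:ℤ) else 0)
        - (if bt l (i:ℕ) ≡ t₂ [ZMOD (k:ℤ)] then (1:ℤ) else 0) *
          (if (0:ℤ) ≤ (l.parts i : ℤ) - ((i:ℕ):ℤ) + ((j:ℕ):ℤ) ∧
            (l.parts i : ℤ) - ((i:ℕ):ℤ) + ((j:ℕ):ℤ) < k then (1:ℤ) else 0) := by
      intro i; ring
    rw [Finset.sum_congr rfl (fun i _ => hexp i), Finset.sum_sub_distrib, h1, h2]
    ring


end Petrie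
end

section
/- For every k ≥ 2, Σ m_λ, summed over partitions λ of 2k-1 with λ ⊴ (k-1,k-1,1) in dominance order, equals Σ_{i=0}^{k-2} (-1)^i s_{(k-1, k-1-i, 1^{i+1})}. -/
open scoped Classical

namespace Petrie

lemma degree_add (d1 d2 : ℕ →₀ ℕ) : degree (d1 + d2) = degree d1 + degree d2 :=
  Finsupp.sum_add_index' (fun _ => rfl) (fun _ _ _ => rfl)

lemma degree_eq_sum (d : ℕ →₀ ℕ) : degree d = ∑ i ∈ d.support, d i := rfl

lemma apply_le_degree (d : ℕ →₀ ℕ) (i : ℕ) : d i ≤ degree d := by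
  by_cases hi : i ∈ d.support
  · rw [degree_eq_sum]
    exact Finset.single_le_sum (fun _ _ => Nat.zero_le _) hi
  · rw [Finsupp.notMem_support_iff.mp hi]
    exact Nat.zero_le _

lemma degree_eq_zero_iff (d : ℕ →₀ ℕ) : degree d = 0 ↔ d = 0 := by
  constructor
  · intro h
    ext i
    have := apply_le_degree d i
    simp only [Finsupp.coe_zero, Pi.zero_apply]
    omega
  · rintro rfl; rfl

lemma degree_single (i n : ℕ) : degree (Finsupp.single i n) = n :=
  Finsupp.sum_single_index rfl

lemma mul_apply (f g : SymFn) (d : ℕ →₀ ℕ) :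
    (f * g) d = ∑ p ∈ Finset.HasAntidiagonal.antidiagonal d, f p.1 * g p.2 :=
  MvPowerSeries.coeff_mul d f g

lemma one_apply (d : ℕ →₀ ℕ) : (1 : SymFn) d = if d = 0 then 1 else 0 :=
  MvPowerSeries.coeff_one d (R := ℤ)

lemma hfun_zero : hfun 0 = 1 := by
  funext d
  show (if degree d = 0 then (1:ℤ) else 0) = _
  rw [one_apply, if_congr (degree_eq_zero_iff d) rfl rfl]

lemma esymmF_zero : esymmF 0 = 1 := by
  funext d
  show (if degree d = 0 ∧ ∀ i, d i ≤ 1 then (1:ℤ) else 0) = _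
  rw [one_apply]
  by_cases h : d = 0
  · subst h; simp [(degree_eq_zero_iff (0:ℕ→₀ℕ)).mpr rfl]
  · rw [if_neg h, if_neg]
    rintro ⟨h1, -⟩
    exact h ((degree_eq_zero_iff d).mp h1)

lemma esymmF_one : esymmF 1 = hfun 1 := by
  funext d
  show (if degree d = 1 ∧ ∀ i, d i ≤ 1 then (1:ℤ) else 0)
      = (if degree d = 1 then (1:ℤ) else 0)
  by_cases h : degree d = 1
  · have hb : ∀ i, d i ≤ 1 := fun i => h ▸ apply_le_degree d i
    simp [h, hb]
  · simp [h]

/-- indicator finsupp of a finset -/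
noncomputable def indic (A : Finset ℕ) : ℕ →₀ ℕ :=
  Finsupp.onFinset A (fun i => if i ∈ A then 1 else 0) (by intro i h; by_contra hi; simp [hi] at h)

@[simp] lemma indic_apply (A : Finset ℕ) (i : ℕ) : indic A i = if i ∈ A then 1 else 0 := rfl

@[simp] lemma indic_support (A : Finset ℕ) : (indic A).support = A := by
  ext i
  by_cases hi : i ∈ A <;> simp [Finsupp.mem_support_iff, hi]

lemma degree_indic (A : Finset ℕ) : degree (indic A) = A.card := by
  rw [degree_eq_sum, indic_support, Finset.card_eq_sum_ones]
  exact Finset.sum_congr rfl (fun i hi => by simp [hi])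

lemma binary_eq_indic (d : ℕ →₀ ℕ) (h : ∀ i, d i ≤ 1) : d = indic d.support := by
  ext i
  by_cases hi : i ∈ d.support
  · have h1 := Finsupp.mem_support_iff.mp hi
    have h2 := h i
    simp only [indic_apply, if_pos hi]
    omega
  · simp [hi, Finsupp.notMem_support_iff.mp hi]

lemma indic_le (A : Finset ℕ) (d : ℕ →₀ ℕ) (h : A ⊆ d.support) : indic A ≤ d := by
  intro i
  by_cases hi : i ∈ A
  · have := Finsupp.mem_support_iff.mp (h hi)
    simp [hi]; omega
  · simp [hi]

lemma card_support_of_binary (d : ℕ →₀ ℕ) (h : ∀ i, d i ≤ 1) :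
    d.support.card = degree d := by
  conv_rhs => rw [binary_eq_indic d h]
  rw [degree_indic]

/-- Key multiplication formula: `h_a * e_b`. -/
lemma mul_he (a b : ℕ) (d : ℕ →₀ ℕ) :
    (hfun a * esymmF b) d =
      if degree d = a + b then ((d.support.card.choose b : ℕ) : ℤ) else 0 := by
  rw [mul_apply]
  by_cases hdeg : degree d = a + b
  · rw [if_pos hdeg]
    have hc : ∀ p ∈ Finset.HasAntidiagonal.antidiagonal d,
        hfun a p.1 * esymmF b p.2 =
        if (degree p.2 = b ∧ ∀ i, p.2 i ≤ 1) ∧ degree p.1 = a then (1:ℤ) else 0 := by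
      intro p _
      show (if degree p.1 = a then (1:ℤ) else 0) * (if _ ∧ _ then (1:ℤ) else 0) = _
      by_cases h1 : degree p.1 = a <;> by_cases h2 : degree p.2 = b ∧ ∀ i, p.2 i ≤ 1 <;>
        simp [h1, h2]
    rw [Finset.sum_congr rfl hc, Finset.sum_boole]
    rw [← Finset.card_powersetCard b d.support]
    congr 1
    apply Finset.card_bij' (fun p _ => p.2.support)
      (fun A _ => ((d - indic A, indic A) : (ℕ →₀ ℕ) × (ℕ →₀ ℕ)))
    · intro p hp
      rw [Finset.mem_filter, Finset.HasAntidiagonal.mem_antidiagonal] at hp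
      obtain ⟨hsum, ⟨hdb, hbin⟩, -⟩ := hp
      rw [Finset.mem_powersetCard]
      constructor
      · have : p.2 ≤ d := hsum ▸ le_add_self
        exact Finsupp.support_mono this
      · rw [card_support_of_binary _ hbin, hdb]
    · intro A hA
      rw [Finset.mem_powersetCard] at hA
      obtain ⟨hsub, hcard⟩ := hA
      have hle : indic A ≤ d := indic_le A d hsub
      have hsum : d - indic A + indic A = d := tsub_add_cancel_of_le hle
      rw [Finset.mem_filter, Finset.HasAntidiagonal.mem_antidiagonal]
      refine ⟨hsum, ⟨?_, ?_⟩, ?_⟩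
      · rw [degree_indic, hcard]
      · intro i; simp only [indic_apply]; split <;> omega
      · show degree (d - indic A) = a
        have := degree_add (d - indic A) (indic A)
        rw [hsum, hdeg, degree_indic, hcard] at this
        omega
    · intro p hp
      rw [Finset.mem_filter, Finset.HasAntidiagonal.mem_antidiagonal] at hp
      obtain ⟨hsum, ⟨-, hbin⟩, -⟩ := hp
      have h2 : indic p.2.support = p.2 := (binary_eq_indic p.2 hbin).symm
      have h1 : d - indic p.2.support = p.1 := by
        rw [h2]; exact (eq_tsub_of_add_eq hsum).symm
      rw [Prod.ext_iff]
      exact ⟨h1, h2⟩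
    · intro A _
      simp
  · rw [if_neg hdeg]
    apply Finset.sum_eq_zero
    intro p hp
    have hsum := Finset.HasAntidiagonal.mem_antidiagonal.mp hp
    show (if degree p.1 = a then (1:ℤ) else 0) * (if _ ∧ _ then (1:ℤ) else 0) = 0
    by_cases h1 : degree p.1 = a <;> by_cases h2 : degree p.2 = b ∧ ∀ i, p.2 i ≤ 1
    · exfalso; exact hdeg (by rw [← hsum, degree_add, h1, h2.1])
    · simp [h1, h2]
    · simp [h1]
    · simp [h1, h2]


open Finset

lemma sum_apply' {α : Type*} (s : Finset α) (f : α → SymFn) (d : ℕ →₀ ℕ) :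
    (∑ i ∈ s, f i) d = ∑ i ∈ s, f i d :=
  map_sum (MvPowerSeries.coeff d) f s

lemma smul_apply' (c : ℤ) (f : SymFn) (d : ℕ →₀ ℕ) : (c • f) d = c * f d := rfl

lemma sub_apply' (f g : SymFn) (d : ℕ →₀ ℕ) : (f - g) d = f d - g d := rfl

lemma card_support_le_degree (d : ℕ →₀ ℕ) : d.support.card ≤ degree d := by
  rw [degree_eq_sum, Finset.card_eq_sum_ones]
  apply Finset.sum_le_sum
  intro i hi
  have := Finsupp.mem_support_iff.mp hi
  omega

lemma support_card_zero_iff (d : ℕ →₀ ℕ) : d.support.card = 0 ↔ d = 0 := by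
  rw [Finset.card_eq_zero, Finsupp.support_eq_empty]

lemma alt1 (m n : ℕ) (h : m ≤ n) :
    ∑ t ∈ range (n+1), (-1:ℤ)^t * m.choose t = if m = 0 then 1 else 0 := by
  rw [← Int.alternating_sum_range_choose (n := m)]
  symm
  apply Finset.sum_subset (by
    apply Finset.range_subset_range.mpr; omega)
  intro t _ ht
  rw [Finset.mem_range] at ht
  rw [Nat.choose_eq_zero_of_lt (by omega)]
  simp

lemma alt2 (m n : ℕ) (h : m ≤ n) :
    ∑ t ∈ range (n+1), (-1:ℤ)^t * t * m.choose t = if m = 1 then -1 else 0 := by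
  rcases Nat.eq_zero_or_pos m with hm | hm
  · subst hm
    rw [if_neg (by omega)]
    apply Finset.sum_eq_zero
    intro t _
    rcases t with _ | t'
    · simp
    · rw [Nat.choose_eq_zero_of_lt (by omega)]; simp
  · obtain ⟨m', rfl⟩ : ∃ m', m = m' + 1 := ⟨m - 1, by omega⟩
    have h3 : ∀ t : ℕ, ((m':ℤ)+1) * (m'.choose t) = ((t:ℤ)+1) * ((m'+1).choose (t+1)) := by
      intro t
      have h2 : ((m'+1) * m'.choose t : ℕ) = ((t+1) * ((m'+1).choose (t+1)) : ℕ) := by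
        rw [Nat.add_one_mul_choose_eq m' t]; ring
      exact_mod_cast h2
    rw [Finset.sum_range_succ']
    have hterm : ∀ t ∈ range n, (-1:ℤ)^(t+1) * (↑(t+1)) * ((m'+1).choose (t+1)) =
        (-((m':ℤ)+1)) * ((-1)^t * m'.choose t) := by
      intro t _
      have := h3 t
      push_cast
      linear_combination ((-1:ℤ)^t) * this
    rw [Finset.sum_congr rfl hterm, ← Finset.mul_sum]
    obtain ⟨n', rfl⟩ : ∃ n', n = n' + 1 := ⟨n - 1, by omega⟩
    rw [alt1 m' n' (by omega)]
    by_cases h0 : m' = 0 <;> simp [h0]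



/-- The fundamental identity `∑ (-1)^t h_{n-t} e_t = δ_{n,0}`. -/
lemma P1 (n : ℕ) :
    ∑ t ∈ range (n+1), (-1:ℤ)^t • (hfun (n-t) * esymmF t) =
      if n = 0 then (1 : SymFn) else 0 := by
  funext d
  rw [sum_apply']
  have hterm : ∀ t ∈ range (n+1), ((-1:ℤ)^t • (hfun (n-t) * esymmF t)) d =
      (-1:ℤ)^t * (if degree d = n then ((d.support.card.choose t : ℕ) : ℤ) else 0) := by
    intro t ht
    rw [Finset.mem_range] at ht
    rw [smul_apply', mul_he, Nat.sub_add_cancel (show t ≤ n by omega)]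
  rw [Finset.sum_congr rfl hterm]
  by_cases hd : degree d = n
  · simp only [if_pos hd]
    have hm : d.support.card ≤ n := hd ▸ card_support_le_degree d
    rw [alt1 _ _ hm]
    by_cases hn : n = 0
    · subst hn
      rw [if_pos ((support_card_zero_iff d).mpr ((degree_eq_zero_iff d).mp hd)), if_pos rfl,
        one_apply, if_pos ((degree_eq_zero_iff d).mp hd)]
    · rw [if_neg hn, if_neg (fun h0 => hn (by
        rw [← hd, (support_card_zero_iff d).mp h0]; try rfl))]
      rfl
  · simp only [if_neg hd, mul_zero, Finset.sum_const_zero]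
    by_cases hn : n = 0
    · subst hn
      rw [if_pos rfl, one_apply, if_neg (fun h0 => hd (by subst h0; rfl))]
    · rw [if_neg hn]; rfl

/-- Newton-type identity giving the power sums. -/
lemma newton (n : ℕ) (hn : 1 ≤ n) :
    ∑ t ∈ range n, ((-1:ℤ)^t * ((n - t : ℕ) : ℤ)) • (hfun (n-t) * esymmF t) = psumF n := by
  funext d
  rw [sum_apply']
  have hterm : ∀ t ∈ range n, (((-1:ℤ)^t * ((n - t : ℕ) : ℤ)) • (hfun (n-t) * esymmF t)) d =
      (-1:ℤ)^t * ((n - t : ℕ) : ℤ) * (if degree d = n then ((d.support.card.choose t : ℕ) : ℤ) else 0) := by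
    intro t ht
    rw [Finset.mem_range] at ht
    rw [smul_apply', mul_he, Nat.sub_add_cancel (show t ≤ n by omega)]
  rw [Finset.sum_congr rfl hterm]
  by_cases hd : degree d = n
  · simp only [if_pos hd]
    set m := d.support.card with hmdef
    have hm : m ≤ n := hd ▸ card_support_le_degree d
    have hsplit : ∀ t ∈ range (n+1), (-1:ℤ)^t * ((n - t : ℕ) : ℤ) * (m.choose t : ℤ) =
        (n : ℤ) * ((-1)^t * m.choose t) - ((-1:ℤ)^t * t * m.choose t) := by
      intro t ht
      rw [Finset.mem_range] at ht
      have : ((n - t : ℕ) : ℤ) = (n : ℤ) - t := by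
        rw [Nat.cast_sub (by omega)]
      rw [this]; ring
    have hext : ∑ t ∈ range n, (-1:ℤ)^t * ((n - t : ℕ) : ℤ) * (m.choose t : ℤ) =
        ∑ t ∈ range (n+1), (-1:ℤ)^t * ((n - t : ℕ) : ℤ) * (m.choose t : ℤ) := by
      rw [Finset.sum_range_succ]
      simp
    rw [hext, Finset.sum_congr rfl hsplit, Finset.sum_sub_distrib, ← Finset.mul_sum,
      alt1 m n hm, alt2 m n hm]
    have hm0 : m ≠ 0 := by
      intro h0
      have : d = 0 := (support_card_zero_iff d).mp h0
      subst this
      exact (by omega : ¬ (0 = n)) ((degree_eq_zero_iff 0).mpr rfl ▸ hd)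
    rw [if_neg hm0]
    show (↑n * 0 - if m = 1 then (-1:ℤ) else 0) = psumF n d
    show _ = if ∃ i, d = Finsupp.single i n then (1:ℤ) else 0
    by_cases hm1 : m = 1
    · rw [if_pos hm1, if_pos]
      · ring
      · obtain ⟨i, hi⟩ := Finset.card_eq_one.mp hm1
        obtain ⟨hne, hsing⟩ := Finsupp.support_eq_singleton.mp hi
        refine ⟨i, ?_⟩
        rw [hsing]
        congr 1
        have hdi : degree d = d i := by
          nth_rewrite 1 [hsing]
          rw [degree_single]
        omega
    · rw [if_neg hm1, if_neg]
      · ring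
      · rintro ⟨i, rfl⟩
        exact hm1 (by
          rw [hmdef, Finsupp.support_single_ne_zero i (by omega : n ≠ 0)]
          simp)
  · simp only [if_neg hd, mul_zero, Finset.sum_const_zero]
    symm
    show (if ∃ i, d = Finsupp.single i n then (1:ℤ) else 0) = 0
    rw [if_neg]
    rintro ⟨i, rfl⟩
    exact hd (degree_single i n)

/-- The Petrie series in degree `2k-1`. -/
lemma G_decomp (k : ℕ) (hk : 2 ≤ k) :
    G k (2*k-1) = hfun (2*k-1) - psumF k * hfun (k-1) := by
  funext d
  rw [sub_apply']
  show (if degree d = 2*k-1 ∧ ∀ i, d i < k then (1:ℤ) else 0)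
      = (if degree d = 2*k-1 then (1:ℤ) else 0) - (psumF k * hfun (k-1)) d
  rw [mul_apply]
  by_cases hd : degree d = 2*k-1
  · have hps : ∀ i₀, k ≤ d i₀ → (∑ p ∈ Finset.HasAntidiagonal.antidiagonal d,
        psumF k p.1 * hfun (k-1) p.2) = 1 := by
      intro i₀ hi₀
      have hle : Finsupp.single i₀ k ≤ d := Finsupp.single_le_iff.mpr hi₀
      have hmem : ((Finsupp.single i₀ k, d - Finsupp.single i₀ k) : (ℕ→₀ℕ) × (ℕ→₀ℕ))
          ∈ Finset.HasAntidiagonal.antidiagonal d := by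
        rw [Finset.HasAntidiagonal.mem_antidiagonal]
        exact add_tsub_cancel_of_le hle
      rw [Finset.sum_eq_single_of_mem _ hmem]
      · show (if ∃ i, Finsupp.single i₀ k = Finsupp.single i k then (1:ℤ) else 0) *
            (if degree (d - Finsupp.single i₀ k) = k-1 then (1:ℤ) else 0) = 1
        rw [if_pos ⟨i₀, rfl⟩, if_pos, one_mul]
        have := degree_add (Finsupp.single i₀ k) (d - Finsupp.single i₀ k)
        rw [add_tsub_cancel_of_le hle, degree_single] at this
        omega
      · rintro ⟨q1, q2⟩ hq hne
        rw [Finset.HasAntidiagonal.mem_antidiagonal] at hq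
        show (if ∃ i, q1 = Finsupp.single i k then (1:ℤ) else 0) * _ = 0
        rw [if_neg, zero_mul]
        rintro ⟨j, rfl⟩
        have hdj : k ≤ d j := by
          have : Finsupp.single j k ≤ d := by rw [← hq]; exact self_le_add_right _ _
          exact Finsupp.single_le_iff.mp this
        have hij : j = i₀ := by
          by_contra hji
          have hsub : ({j, i₀} : Finset ℕ) ⊆ d.support := by
            intro x hx
            rw [Finset.mem_insert, Finset.mem_singleton] at hx
            rcases hx with rfl | rfl <;> rw [Finsupp.mem_support_iff] <;> omega
          have h3 := Finset.sum_le_sum_of_subset hsub (f := fun i => d i)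
          rw [Finset.sum_pair hji] at h3
          have h4 : d j + d i₀ ≤ degree d := by rw [degree_eq_sum]; exact h3
          omega
        subst hij
        apply hne
        have : q2 = d - Finsupp.single j k := eq_tsub_of_add_eq (by rw [add_comm]; exact hq)
        rw [this]
    by_cases hall : ∀ i, d i < k
    · rw [if_pos ⟨hd, hall⟩, if_pos hd]
      have : (∑ p ∈ Finset.HasAntidiagonal.antidiagonal d, psumF k p.1 * hfun (k-1) p.2) = 0 := by
        apply Finset.sum_eq_zero
        rintro ⟨q1, q2⟩ hq
        rw [Finset.HasAntidiagonal.mem_antidiagonal] at hq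
        show (if ∃ i, q1 = Finsupp.single i k then (1:ℤ) else 0) * _ = 0
        rw [if_neg, zero_mul]
        rintro ⟨j, rfl⟩
        have h5 : Finsupp.single j k ≤ d := by rw [← hq]; exact self_le_add_right _ _
        have := Finsupp.single_le_iff.mp h5
        exact absurd (hall j) (by omega)
      rw [this]; ring
    · push_neg at hall
      obtain ⟨i₀, hi₀⟩ := hall
      rw [if_neg (fun h => by have := h.2 i₀; omega), if_pos hd, hps i₀ (by omega)]
      ring
  · rw [if_neg (fun h => hd h.1), if_neg hd]
    have : (∑ p ∈ Finset.HasAntidiagonal.antidiagonal d, psumF k p.1 * hfun (k-1) p.2) = 0 := by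
      apply Finset.sum_eq_zero
      rintro ⟨q1, q2⟩ hq
      rw [Finset.HasAntidiagonal.mem_antidiagonal] at hq
      show (if ∃ i, q1 = Finsupp.single i k then (1:ℤ) else 0) *
          (if degree q2 = k-1 then (1:ℤ) else 0) = 0
      by_cases h1 : ∃ i, q1 = Finsupp.single i k
      · by_cases h2 : degree q2 = k-1
        · exfalso
          obtain ⟨j, rfl⟩ := h1
          apply hd
          rw [← hq, degree_add, degree_single, h2]
          omega
        · rw [if_neg h2, mul_zero]
      · rw [if_neg h1, zero_mul]
    rw [this]; ring

/-- hook Schur functions, via their `h`/`e` expansion -/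
noncomputable def Hook (a m : ℕ) : SymFn :=
  ∑ j ∈ range (m+1), (-1:ℤ)^j • (hfun (a+j) * esymmF (m-j))

lemma Hook_zero (a : ℕ) : Hook a 0 = hfun a := by
  simp [Hook, esymmF_zero]

lemma Hook_succ (a m : ℕ) : Hook a (m+1) = hfun a * esymmF (m+1) - Hook (a+1) m := by
  rw [Hook, Finset.sum_range_succ']
  have : ∀ j ∈ range (m+1), (-1:ℤ)^(j+1) • (hfun (a+(j+1)) * esymmF (m+1-(j+1))) =
      -((-1:ℤ)^j • (hfun (a+1+j) * esymmF (m-j))) := by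
    intro j _
    rw [pow_succ]
    have h1 : a + (j+1) = a+1+j := by omega
    have h2 : m+1-(j+1) = m - j := by omega
    rw [h1, h2]
    module
  rw [Finset.sum_congr rfl this, Finset.sum_neg_distrib]
  show -(Hook (a+1) m) + (-1:ℤ)^0 • (hfun (a+0) * esymmF (m+1-0)) = _
  simp only [pow_zero, one_smul, Nat.add_zero, Nat.sub_zero]
  ring

/-! ### Partition infrastructure -/

lemma Partition.ext' {l l' : Partition} (h : l.parts = l'.parts) : l = l' := by
  cases l; cases l'; simpa using h

lemma parts_zero_iff (l : Partition) (i : ℕ) : l.parts i = 0 ↔ length l ≤ i := by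
  have hne : {j | l.parts j = 0}.Nonempty := by
    obtain ⟨N, hN⟩ := l.fin_supp
    exact ⟨N, hN N le_rfl⟩
  constructor
  · intro h
    exact Nat.sInf_le h
  · intro h
    have hmem : l.parts (length l) = 0 := Nat.sInf_mem hne
    have := l.antitone h
    omega

lemma parts_pos (l : Partition) (i : ℕ) (h : i < length l) : 0 < l.parts i := by
  have := (parts_zero_iff l i)
  omega

lemma psize_eq_sum (l : Partition) (N : ℕ) (hN : length l ≤ N) :
    psize l = ∑ i ∈ range N, l.parts i := by
  apply finsum_eq_finset_sum_of_support_subset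
  intro i hi
  simp only [Function.mem_support] at hi
  rw [Finset.coe_range, Set.mem_Iio]
  have := (parts_zero_iff l i)
  omega

lemma length_le_psize (l : Partition) : length l ≤ psize l := by
  rw [psize_eq_sum l (length l) le_rfl]
  calc length l = ∑ _i ∈ range (length l), 1 := by simp
    _ ≤ ∑ i ∈ range (length l), l.parts i :=
        Finset.sum_le_sum (fun i hi => parts_pos l i (Finset.mem_range.mp hi))

lemma parts_le_psize (l : Partition) (i : ℕ) : l.parts i ≤ psize l := by
  by_cases h : i < length l
  · rw [psize_eq_sum l (length l) le_rfl]
    exact Finset.single_le_sum (f := fun j => l.parts j) (fun _ _ => Nat.zero_le _)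
      (Finset.mem_range.mpr h)
  · have : l.parts i = 0 := (parts_zero_iff l i).mpr (by omega)
    omega

/-- the multiset of (nonzero) parts -/
noncomputable def pmul (l : Partition) : Multiset ℕ :=
  Multiset.map l.parts (Multiset.range (length l))

lemma pmul_list (l : Partition) :
    pmul l = ((List.range (length l)).map l.parts : List ℕ) := by
  rfl

lemma pmul_sum (l : Partition) : (pmul l).sum = psize l := by
  rw [psize_eq_sum l (length l) le_rfl]
  rfl

lemma getD_map_range (f : ℕ → ℕ) (n i : ℕ) (h : i < n) :
    (((List.range n).map f).getD i 0) = f i := by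
  rw [List.getD_eq_getElem _ _ (by simpa using h)]
  simp

lemma sorted_parts (l : Partition) (n : ℕ) :
    ((List.range n).map l.parts).Pairwise (· ≥ ·) := by
  rw [List.pairwise_map]
  exact List.Pairwise.imp (fun h => l.antitone (le_of_lt h)) List.pairwise_lt_range

lemma pmul_inj {l l' : Partition} (h : pmul l = pmul l') : l = l' := by
  rw [pmul_list, pmul_list, Multiset.coe_eq_coe] at h
  have heq : (List.range (length l)).map l.parts = (List.range (length l')).map l'.parts :=
    List.Perm.eq_of_pairwise' (sorted_parts l _) (sorted_parts l' _) h
  have hlen : length l = length l' := by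
    have := congrArg List.length heq
    simpa using this
  apply Partition.ext'
  funext i
  by_cases hi : i < length l
  · have h1 := congrArg (fun L => L.getD i 0) heq
    beta_reduce at h1
    rw [getD_map_range _ _ _ hi, getD_map_range _ _ _ (by omega)] at h1
    exact h1
  · have e1 : l.parts i = 0 := (parts_zero_iff l i).mpr (by omega)
    have e2 : l'.parts i = 0 := (parts_zero_iff l' i).mpr (by omega)
    rw [e1, e2]

/-! ### ofList and dominance -/

lemma foldr_max_le (L : List ℕ) (a : ℕ) (h : ∀ x ∈ L, x ≤ a) : L.foldr max 0 ≤ a := by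
  induction L with
  | nil => simp
  | cons b t ih =>
    simp only [List.foldr_cons, max_le_iff]
    exact ⟨h b (by simp), ih (fun x hx => h x (by simp [hx]))⟩

lemma foldr_max_sorted (L : List ℕ) (h : L.Pairwise (· ≥ ·)) :
    L.foldr max 0 = L.headD 0 := by
  cases L with
  | nil => rfl
  | cons a t =>
    simp only [List.foldr_cons, List.headD_cons]
    have := (List.pairwise_cons.mp h).1
    exact max_eq_left (foldr_max_le t a this)

lemma getD_eq_headD_drop (L : List ℕ) (i : ℕ) : L.getD i 0 = (L.drop i).headD 0 := by
  induction i generalizing L with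
  | zero => cases L <;> rfl
  | succ n ih => cases L with
    | nil => rfl
    | cons a t => simpa using ih t

lemma ofList_parts (L : List ℕ) (h : L.Pairwise (· ≥ ·)) (i : ℕ) :
    (ofList L).parts i = L.getD i 0 := by
  show (L.drop i).foldr max 0 = _
  rw [foldr_max_sorted _ (List.Pairwise.sublist (List.drop_sublist i L) h), getD_eq_headD_drop]

lemma ofList_length (L : List ℕ) (h : L.Pairwise (· ≥ ·)) (hpos : ∀ x ∈ L, 0 < x) :
    length (ofList L) = L.length := by
  have hset : {i | (ofList L).parts i = 0} = {i | L.length ≤ i} := by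
    ext j
    simp only [Set.mem_setOf_eq]
    rw [ofList_parts L h]
    constructor
    · intro hj
      by_contra hlt
      have hmem : L.getD j 0 ∈ L := by
        rw [List.getD_eq_getElem _ _ (by omega)]
        exact List.getElem_mem _
      have := hpos _ hmem
      omega
    · intro hj
      rw [List.getD_eq_default]
      omega
  show sInf _ = _
  rw [hset]
  refine le_antisymm (Nat.sInf_le (by simp : L.length ∈ {i | L.length ≤ i}))
    (le_csInf ⟨L.length, (by simp : L.length ∈ {i | L.length ≤ i})⟩ (fun b hb => hb))

lemma map_getD_range_self (L : List ℕ) :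
    (List.range L.length).map (fun i => L.getD i 0) = L := by
  induction L with
  | nil => rfl
  | cons a t ih =>
    show (List.range (t.length + 1)).map _ = _
    rw [List.range_succ_eq_map, List.map_cons, List.map_map]
    have h2 : List.map ((fun i => (a :: t).getD i 0) ∘ Nat.succ) (List.range t.length)
        = List.map (fun i => t.getD i 0) (List.range t.length) :=
      List.map_congr_left (fun i _ => by simp)
    rw [h2, ih]
    rfl

/-- the row partition `(k-1,k-1,1)` -/
lemma mu_sorted (k : ℕ) (hk : 2 ≤ k) : ([k-1, k-1, 1] : List ℕ).Pairwise (· ≥ ·) := by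
  simp [List.pairwise_cons]
  omega

lemma dominates_iff (k : ℕ) (hk : 2 ≤ k) (l : Partition) (hl : psize l = 2*k-1) :
    Dominates (ofList [k-1, k-1, 1]) l ↔ l.parts 0 ≤ k - 1 := by
  have hp : ∀ i, (ofList [k-1, k-1, 1]).parts i = [k-1,k-1,1].getD i 0 :=
    ofList_parts _ (mu_sorted k hk)
  have hsum_l : ∀ r, ∑ i ∈ range r, l.parts i ≤ psize l := by
    intro r
    rw [psize_eq_sum l (max r (length l)) (le_max_right _ _)]
    apply Finset.sum_le_sum_of_subset
    exact Finset.range_subset_range.mpr (le_max_left _ _)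
  constructor
  · intro h
    have := h 1
    rw [Finset.sum_range_one, Finset.sum_range_one, hp 0] at this
    exact this
  · intro h r
    match r with
    | 0 => simp
    | 1 =>
      rw [Finset.sum_range_one, Finset.sum_range_one, hp 0]
      exact h
    | 2 =>
      have h1 : l.parts 1 ≤ l.parts 0 := l.antitone (by omega)
      simp only [Finset.sum_range_succ, Finset.sum_range_zero, hp 0, hp 1,
        List.getD_cons_zero, List.getD_cons_succ]
      omega
    | (r+3) =>
      have hmu : ∑ i ∈ range (r+3), (ofList [k-1,k-1,1]).parts i = 2*k-1 := by
        rw [← Finset.sum_subset (Finset.range_subset_range.mpr (by omega : 3 ≤ r+3))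
          (fun x _ hx => by
            have h3 : 3 ≤ x := by
              by_contra hlt
              exact hx (Finset.mem_range.mpr (by omega))
            rw [hp x, List.getD_eq_default _ _ (by simpa using h3)])]
        simp only [Finset.sum_range_succ, Finset.sum_range_zero, hp 0, hp 1, hp 2,
          List.getD_cons_zero, List.getD_cons_succ]
        omega
      rw [hmu]
      calc ∑ i ∈ range (r+3), l.parts i ≤ psize l := hsum_l _
        _ = 2*k-1 := hl

lemma finite_psize (n : ℕ) : {l : Partition | psize l = n}.Finite := by
  rw [← Set.finite_coe_iff]
  refine Finite.of_injective (fun (l : {l : Partition // psize l = n}) =>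
    (fun i : Fin (n+1) => (⟨l.1.parts i, by
      have h1 := parts_le_psize l.1 i
      have h2 := l.2
      omega⟩ : Fin (n+1)))) ?_
  rintro ⟨l, hl⟩ ⟨l', hl'⟩ h
  have hparts : ∀ i : ℕ, l.parts i = l'.parts i := by
    intro i
    by_cases hi : i < n + 1
    · exact congrArg Fin.val (congrFun h ⟨i, hi⟩)
    · have e1 : l.parts i = 0 := (parts_zero_iff l i).mpr
        (by have h1 := length_le_psize l; have h2 : psize l = n := hl; omega)
      have e2 : l'.parts i = 0 := (parts_zero_iff l' i).mpr
        (by have h1 := length_le_psize l'; have h2 : psize l' = n := hl'; omega)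
      rw [e1, e2]
  exact Subtype.ext (Partition.ext' (funext hparts))

/-- value multiset of an exponent vector -/
noncomputable def vmul (d : ℕ →₀ ℕ) : Multiset ℕ := Multiset.map (fun i => d i) d.support.val

lemma msym_apply (l : Partition) (d : ℕ →₀ ℕ) :
    msym l d = if vmul d = pmul l then 1 else 0 := rfl

lemma vmul_sum (d : ℕ →₀ ℕ) : (vmul d).sum = degree d := rfl

lemma mem_vmul_pos (d : ℕ →₀ ℕ) (x : ℕ) (hx : x ∈ vmul d) : 0 < x := by
  obtain ⟨i, hi, rfl⟩ := Multiset.mem_map.mp hx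
  have := Finsupp.mem_support_iff.mp (by exact hi)
  omega

/-- main evaluation of the LHS -/
lemma lhs_eval (k : ℕ) (hk : 2 ≤ k) :
    ∑ᶠ l ∈ {l : Partition | psize l = 2*k-1 ∧ Dominates (ofList [k-1, k-1, 1]) l}, msym l
      = G k (2*k-1) := by
  set S := {l : Partition | psize l = 2*k-1 ∧ Dominates (ofList [k-1, k-1, 1]) l} with hS
  have hSfin : S.Finite := (finite_psize (2*k-1)).subset (fun l hl => hl.1)
  rw [← Set.Finite.coe_toFinset hSfin, finsum_mem_coe_finset]
  funext d
  rw [sum_apply']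
  have key : ∀ l ∈ hSfin.toFinset, vmul d = pmul l →
      degree d = 2*k-1 ∧ ∀ i, d i < k := by
    intro l hl hvd
    rw [Set.Finite.mem_toFinset] at hl
    obtain ⟨hps, hdom⟩ := hl
    have hdeg : degree d = 2*k-1 := by
      rw [← vmul_sum, hvd, pmul_sum, hps]
    refine ⟨hdeg, fun i => ?_⟩
    by_cases hi : i ∈ d.support
    · have hmem : d i ∈ vmul d := Multiset.mem_map_of_mem _ hi
      rw [hvd] at hmem
      obtain ⟨j, hj, hji⟩ := Multiset.mem_map.mp hmem
      have h0 : l.parts j ≤ l.parts 0 := l.antitone (Nat.zero_le j)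
      have hb := (dominates_iff k hk l hps).mp hdom
      omega
    · rw [Finsupp.notMem_support_iff.mp hi]
      omega
  show (∑ l ∈ hSfin.toFinset, msym l d) = if degree d = 2*k-1 ∧ ∀ i, d i < k then 1 else 0
  by_cases hcond : degree d = 2*k-1 ∧ ∀ i, d i < k
  · rw [if_pos hcond]
    -- construct the unique partition
    set L := Multiset.sort (vmul d) (· ≥ ·) with hLdef
    have hLsorted : L.Pairwise (· ≥ ·) := Multiset.pairwise_sort _ _
    have hLcoe : (↑L : Multiset ℕ) = vmul d := Multiset.sort_eq _ _
    have hLpos : ∀ x ∈ L, 0 < x := fun x hx =>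
      mem_vmul_pos d x (by rw [← hLcoe]; exact_mod_cast hx)
    set ld := ofList L with hlddef
    have hld_parts : ∀ i, ld.parts i = L.getD i 0 := ofList_parts L hLsorted
    have hld_len : length ld = L.length := ofList_length L hLsorted hLpos
    have hld_pmul : pmul ld = vmul d := by
      have hlist : List.map ld.parts (List.range L.length) = L :=
        (List.map_congr_left (fun i _ => hld_parts i)).trans (map_getD_range_self L)
      have hp2 := pmul_list ld
      rw [hld_len] at hp2
      rw [hp2, hlist, hLcoe]
    have hld_psize : psize ld = 2*k-1 := by
      rw [← pmul_sum, hld_pmul, vmul_sum, hcond.1]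
    have hld_p0 : ld.parts 0 ≤ k - 1 := by
      rw [hld_parts 0]
      cases hL : L with
      | nil => simp
      | cons a t =>
        have ha : a ∈ vmul d := by
          rw [← hLcoe, hL]
          exact_mod_cast List.mem_cons_self
        obtain ⟨i, _, hia⟩ := Multiset.mem_map.mp ha
        have := hcond.2 i
        simp only [List.getD_cons_zero]
        omega
    have hld_mem : ld ∈ hSfin.toFinset := by
      rw [Set.Finite.mem_toFinset]
      exact ⟨hld_psize, (dominates_iff k hk ld hld_psize).mpr hld_p0⟩
    rw [Finset.sum_eq_single_of_mem ld hld_mem]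
    · rw [msym_apply, if_pos hld_pmul.symm]
    · intro b hb hbne
      rw [msym_apply, if_neg]
      intro hbd
      exact hbne (pmul_inj (by rw [← hbd, hld_pmul]))
  · rw [if_neg hcond]
    apply Finset.sum_eq_zero
    intro l hl
    rw [msym_apply, if_neg]
    intro hvd
    exact hcond (key l hl hvd)

/-! ### Jacobi–Trudi determinants -/

lemma hz_natCast (a : ℕ) : hz (a : ℤ) = hfun a := by
  rw [hz, if_pos (Int.natCast_nonneg a), Int.toNat_natCast]

lemma hz_neg {n : ℤ} (h : n < 0) : hz n = 0 := if_neg (by omega)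

noncomputable def jt (p : ℕ → ℕ) (n : ℕ) : Matrix (Fin n) (Fin n) SymFn :=
  Matrix.of fun r c => hz ((p r : ℤ) - (r:ℕ) + (c:ℕ))

lemma schur_eq_jt (l : Partition) : schur l = (jt l.parts (length l)).det := rfl

lemma jt_congr (p q : ℕ → ℕ) (n : ℕ) (h : ∀ r < n, p r = q r) : jt p n = jt q n := by
  refine Matrix.ext fun r c => ?_
  show hz ((p r : ℤ) - _ + _) = hz _
  rw [h r r.isLt]

/-- column-0 Laplace expansion for shapes `(p₀, p₁, 1, 1, …)` -/
lemma det_jt_expand (p q0 q1 : ℕ → ℕ) (n : ℕ) (h2 : ∀ r : ℕ, 2 ≤ r → p r = 1)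
    (hq0 : ∀ r < n+1, q0 r = p (r+1))
    (hq10 : q1 0 = p 0 + 1) (hq1 : ∀ r, 1 ≤ r → r < n+1 → q1 r = p (r+1)) :
    (jt p (n+2)).det =
      hfun (p 0) * (jt q0 (n+1)).det - hz ((p 1 : ℤ) - 1) * (jt q1 (n+1)).det := by
  rw [Matrix.det_succ_column_zero, Fin.sum_univ_succ, Fin.sum_univ_succ]
  have htail : ∀ i : Fin n,
      ((-1:SymFn)^(((i.succ.succ : Fin (n+2))):ℕ) * jt p (n+2) i.succ.succ 0 *
        ((jt p (n+2)).submatrix (i.succ.succ).succAbove Fin.succ).det) = 0 := by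
    intro i
    have hv : ((i.succ.succ : Fin (n+2)) : ℕ) = (i:ℕ) + 2 := rfl
    have : jt p (n+2) i.succ.succ 0 = 0 := by
      show hz _ = 0
      apply hz_neg
      rw [hv, h2 ((i:ℕ)+2) (by omega)]
      push_cast [Fin.val_zero]
      omega
    rw [this, mul_zero, zero_mul]
  rw [Finset.sum_congr rfl (fun i _ => htail i), Finset.sum_const_zero, add_zero,
    Fin.succ_zero_eq_one]
  have hm0 : (jt p (n+2)).submatrix ((0 : Fin (n+2)).succAbove) Fin.succ = jt q0 (n+1) := by
    refine Matrix.ext fun r c => ?_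
    show jt p (n+2) ((0 : Fin (n+2)).succAbove r) c.succ = hz _
    rw [Fin.succAbove_zero]
    show hz ((p (r.succ : ℕ) : ℤ) - ((r.succ : Fin (n+2)):ℕ) + ((c.succ : Fin (n+2)):ℕ)) = _
    rw [hq0 r r.isLt]
    congr 1
    push_cast [Fin.val_succ]
    ring
  have hm1 : (jt p (n+2)).submatrix ((1 : Fin (n+2)).succAbove) Fin.succ = jt q1 (n+1) := by
    refine Matrix.ext fun r c => ?_
    show jt p (n+2) ((1 : Fin (n+2)).succAbove r) c.succ = hz _
    induction r using Fin.cases with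
    | zero =>
      have hsa : (1 : Fin (n+2)).succAbove 0 = 0 := by
        apply Fin.succAbove_of_castSucc_lt
        simp [Fin.lt_def]
      rw [hsa]
      show hz ((p 0 : ℤ) - ((0 : Fin (n+2)):ℕ) + ((c.succ : Fin (n+2)):ℕ)) =
        hz ((q1 ((0 : Fin (n+1)):ℕ) : ℤ) - ((0 : Fin (n+1)):ℕ) + (c:ℕ))
      have : q1 ((0 : Fin (n+1)):ℕ) = p 0 + 1 := by
        rw [Fin.val_zero]; exact hq10
      rw [this]
      congr 1
      push_cast [Fin.val_succ, Fin.val_zero]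
      ring
    | succ j =>
      have hsa : (1 : Fin (n+2)).succAbove j.succ = j.succ.succ := by
        apply Fin.succAbove_of_le_castSucc
        simp [Fin.le_def]
      rw [hsa]
      show hz ((p ((j.succ.succ : Fin (n+2)):ℕ) : ℤ) - ((j.succ.succ : Fin (n+2)):ℕ) +
          ((c.succ : Fin (n+2)):ℕ)) =
        hz ((q1 ((j.succ : Fin (n+1)):ℕ) : ℤ) - ((j.succ : Fin (n+1)):ℕ) + (c:ℕ))
      have hv : ((j.succ.succ : Fin (n+2)) : ℕ) = (j:ℕ) + 2 := rfl
      have hq : q1 ((j.succ : Fin (n+1)):ℕ) = p ((j:ℕ)+2) := by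
        rw [Fin.val_succ, hq1 ((j:ℕ)+1) (by omega) (by have := j.isLt; omega)]
      rw [hv, hq]
      congr 1
      push_cast [Fin.val_succ]
      ring
  rw [hm0, hm1]
  have h00 : jt p (n+2) 0 0 = hfun (p 0) := by
    show hz ((p ((0: Fin (n+2)):ℕ) : ℤ) - ((0: Fin (n+2)):ℕ) + ((0: Fin (n+2)):ℕ)) = _
    rw [Fin.val_zero]
    rw [show ((p 0 : ℤ) - (0:ℕ) + (0:ℕ)) = (p 0 : ℤ) by push_cast; ring]
    exact hz_natCast (p 0)
  have h10 : jt p (n+2) 1 0 = hz ((p 1 : ℤ) - 1) := by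
    show hz ((p ((1: Fin (n+2)):ℕ) : ℤ) - ((1: Fin (n+2)):ℕ) + ((0: Fin (n+2)):ℕ)) = _
    rw [Fin.val_one, Fin.val_zero]
    congr 1
    push_cast
    ring
  rw [h00, h10]
  have hs0 : ((0 : Fin (n+2)) : ℕ) = 0 := rfl
  have hs1 : ((1 : Fin (n+2)) : ℕ) = 1 := rfl
  rw [hs0, hs1, pow_zero, pow_one]
  ring

lemma neg_one_sq_pow (m : ℕ) : (-1:ℤ)^m * (-1)^m = 1 := by
  rw [← pow_add, ← two_mul, pow_mul]
  norm_num

lemma neg_one_pow_sub (m j : ℕ) (h : j ≤ m) : (-1:ℤ)^(m-j) = (-1)^m * (-1)^j := by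
  have key : (-1:ℤ)^(m-j) * (-1)^j = (-1)^m := by
    rw [← pow_add, Nat.sub_add_cancel h]
  calc (-1:ℤ)^(m-j) = (-1)^(m-j) * ((-1)^j * (-1)^j) := by rw [neg_one_sq_pow, mul_one]
    _ = (-1)^m * (-1)^j := by rw [← mul_assoc, key]

lemma hook_reflect (b m : ℕ) :
    Hook b m = (-1:ℤ)^m • ∑ t ∈ range (m+1), (-1:ℤ)^t • (hfun (b + (m-t)) * esymmF t) := by
  rw [Finset.smul_sum, Hook, ← Finset.sum_range_reflect
    (fun j => (-1:ℤ)^j • (hfun (b+j) * esymmF (m-j))) (m+1)]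
  apply Finset.sum_congr rfl
  intro j hj
  rw [Finset.mem_range] at hj
  have h1 : m + 1 - 1 - j = m - j := by omega
  have h2 : m - (m - j) = j := by omega
  rw [h1, h2, smul_smul, ← neg_one_pow_sub m j (by omega)]

lemma e_rec (m : ℕ) : Hook 2 m = hfun 1 * esymmF (m+1) - esymmF (m+2) := by
  have hP := P1 (m+2)
  rw [if_neg (by omega), Finset.sum_range_succ, Finset.sum_range_succ] at hP
  have e1 : m + 2 - (m+1) = 1 := by omega
  have e2 : m + 2 - (m+2) = 0 := by omega
  rw [e1, e2, hfun_zero, one_mul] at hP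
  have hA : ∑ t ∈ range (m+1), (-1:ℤ)^t • (hfun (m+2-t) * esymmF t)
      = -((-1:ℤ)^(m+1) • (hfun 1 * esymmF (m+1))) - ((-1:ℤ)^(m+2) • esymmF (m+2)) := by
    calc ∑ t ∈ range (m+1), (-1:ℤ)^t • (hfun (m+2-t) * esymmF t)
        = (∑ t ∈ range (m+1), (-1:ℤ)^t • (hfun (m+2-t) * esymmF t)
            + (-1:ℤ)^(m+1) • (hfun 1 * esymmF (m+1)) + (-1:ℤ)^(m+2) • esymmF (m+2))
          - ((-1:ℤ)^(m+1) • (hfun 1 * esymmF (m+1))) - ((-1:ℤ)^(m+2) • esymmF (m+2)) := by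
            abel
      _ = -((-1:ℤ)^(m+1) • (hfun 1 * esymmF (m+1))) - ((-1:ℤ)^(m+2) • esymmF (m+2)) := by
            rw [hP]; abel
  have hconv : ∑ t ∈ range (m+1), (-1:ℤ)^t • (hfun (2 + (m-t)) * esymmF t)
      = ∑ t ∈ range (m+1), (-1:ℤ)^t • (hfun (m+2-t) * esymmF t) := by
    apply Finset.sum_congr rfl
    intro t ht
    rw [Finset.mem_range] at ht
    rw [show 2 + (m-t) = m+2-t by omega]
  rw [hook_reflect 2 m, hconv, hA]
  have hsign1 : (-1:ℤ)^m * (-1)^(m+1) = -1 := by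
    rw [pow_succ, ← mul_assoc, neg_one_sq_pow]; ring
  have hsign2 : (-1:ℤ)^m * (-1)^(m+2) = 1 := by
    rw [pow_add, ← mul_assoc, neg_one_sq_pow]; norm_num
  rw [smul_sub, smul_neg, smul_smul, smul_smul, hsign1, hsign2, neg_one_smul, one_smul]
  abel

noncomputable def colM (m : ℕ) : Matrix (Fin m) (Fin m) SymFn := jt (fun _ => 1) m
noncomputable def hookM (a m : ℕ) : Matrix (Fin (m+1)) (Fin (m+1)) SymFn :=
  jt (fun r => if r = 0 then a else 1) (m+1)

lemma main_det (m : ℕ) : (colM m).det = esymmF m ∧ ∀ a, (hookM a m).det = Hook a m := by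
  induction m using Nat.strong_induction_on with
  | _ m ih =>
    match m with
    | 0 =>
      constructor
      · show (jt _ 0).det = _
        rw [Matrix.det_fin_zero, esymmF_zero]
      · intro a
        show (jt _ 1).det = _
        rw [Matrix.det_fin_one, Hook_zero]
        show hz (((if ((0:Fin 1):ℕ) = 0 then a else 1 : ℕ) : ℤ) - ((0:Fin 1):ℕ) + ((0:Fin 1):ℕ))
            = hfun a
        rw [show (((if ((0:Fin 1):ℕ) = 0 then a else 1 : ℕ) : ℤ) - ((0:Fin 1):ℕ) + ((0:Fin 1):ℕ))
          = (a : ℤ) by norm_num, hz_natCast]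
    | 1 =>
      have hA : (colM 1).det = esymmF 1 := by
        show (jt _ 1).det = _
        rw [Matrix.det_fin_one, esymmF_one]
        show hz (((1:ℕ) : ℤ) - ((0:Fin 1):ℕ) + ((0:Fin 1):ℕ)) = hfun 1
        rw [show (((1:ℕ) : ℤ) - ((0:Fin 1):ℕ) + ((0:Fin 1):ℕ)) = ((1:ℕ) : ℤ) by norm_num,
          hz_natCast]
      refine ⟨hA, fun a => ?_⟩
      show (jt (fun r => if r = 0 then a else 1) 2).det = _
      rw [det_jt_expand (fun r => if r = 0 then a else 1) (fun _ => 1)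
        (fun r => if r = 0 then a + 1 else 1) 0
        (fun r hr => by beta_reduce; rw [if_neg (by omega)])
        (fun r _ => by beta_reduce; rw [if_neg (by omega : ¬ r + 1 = 0)])
        (by simp)
        (fun r hr _ => by beta_reduce; rw [if_neg (by omega), if_neg (by omega : ¬ r + 1 = 0)])]
      show hfun a * (colM 1).det - hz (((1:ℕ):ℤ) - 1) * (hookM (a+1) 0).det = _
      rw [hA, (ih 0 (by omega)).2 (a+1)]
      rw [show ((1:ℕ):ℤ) - 1 = ((0:ℕ):ℤ) by norm_num, hz_natCast, hfun_zero, one_mul,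
        Hook_succ a 0]
    | (m'+2) =>
      have hA : (colM (m'+2)).det = esymmF (m'+2) := by
        show (jt (fun _ => 1) (m'+2)).det = _
        rw [det_jt_expand (fun _ => 1) (fun _ => 1) (fun r => if r = 0 then 2 else 1) m'
          (fun r _ => rfl)
          (fun r _ => rfl)
          (by simp)
          (fun r hr _ => by beta_reduce; rw [if_neg (by omega)])]
        show hfun 1 * (colM (m'+1)).det - hz (((1:ℕ):ℤ) - 1) * (hookM 2 m').det = _
        rw [(ih (m'+1) (by omega)).1, (ih m' (by omega)).2 2]
        rw [show ((1:ℕ):ℤ) - 1 = ((0:ℕ):ℤ) by norm_num, hz_natCast, hfun_zero, one_mul,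
          e_rec m']
        abel
      refine ⟨hA, fun a => ?_⟩
      show (jt (fun r => if r = 0 then a else 1) (m'+3)).det = _
      rw [det_jt_expand (fun r => if r = 0 then a else 1) (fun _ => 1)
        (fun r => if r = 0 then a + 1 else 1) (m'+1)
        (fun r hr => by beta_reduce; rw [if_neg (by omega)])
        (fun r _ => by beta_reduce; rw [if_neg (by omega : ¬ r + 1 = 0)])
        (by simp)
        (fun r hr _ => by beta_reduce; rw [if_neg (by omega), if_neg (by omega : ¬ r + 1 = 0)])]
      show hfun a * (colM (m'+2)).det - hz (((1:ℕ):ℤ) - 1) * (hookM (a+1) (m'+1)).det = _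
      rw [hA, (ih (m'+1) (by omega)).2 (a+1)]
      rw [show ((1:ℕ):ℤ) - 1 = ((0:ℕ):ℤ) by norm_num, hz_natCast, hfun_zero, one_mul,
        Hook_succ a (m'+1)]

/-! ### summation identities -/

lemma sum_tri {A : Type*} [AddCommMonoid A] (g : ℕ → A) (n : ℕ) :
    ∑ i ∈ range n, ∑ c ∈ range (i+1), g c = ∑ c ∈ range n, (n - c) • g c := by
  induction n with
  | zero => simp
  | succ n ih =>
    rw [Finset.sum_range_succ, ih]
    have hterm : ∀ c ∈ range n, (n+1-c) • g c = (n-c) • g c + g c := by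
      intro c hc
      rw [Finset.mem_range] at hc
      rw [show n+1-c = (n-c)+1 by omega, succ_nsmul]
    calc (∑ c ∈ range n, (n-c) • g c) + ∑ c ∈ range (n+1), g c
        = (∑ c ∈ range n, ((n-c) • g c + g c)) + g n := by
          rw [Finset.sum_add_distrib, Finset.sum_range_succ]; abel
      _ = (∑ c ∈ range n, (n+1-c) • g c) + (n+1-n) • g n := by
          rw [Finset.sum_congr rfl hterm, show n+1-n = 1 by omega, one_nsmul]
      _ = ∑ c ∈ range (n+1), (n+1-c) • g c := (Finset.sum_range_succ _ n).symm

/-- hook expansion of the power sum -/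
lemma U_eval (k : ℕ) (hk : 1 ≤ k) :
    ∑ i ∈ range k, (-1:ℤ)^i • Hook (k-i) i = psumF k := by
  have hHook : ∀ i ∈ range k, (-1:ℤ)^i • Hook (k-i) i
      = ∑ c ∈ range (i+1), (-1:ℤ)^c • (hfun (k-c) * esymmF c) := by
    intro i hi
    rw [Finset.mem_range] at hi
    rw [Hook, ← Finset.sum_range_reflect
      (fun j => (-1:ℤ)^j • (hfun ((k-i)+j) * esymmF (i-j))) (i+1), Finset.smul_sum]
    apply Finset.sum_congr rfl
    intro c hc
    rw [Finset.mem_range] at hc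
    have h1 : i + 1 - 1 - c = i - c := by omega
    have h2 : (k-i) + (i-c) = k - c := by omega
    have h3 : i - (i-c) = c := by omega
    rw [h1, h2, h3, smul_smul, neg_one_pow_sub i c (by omega), ← mul_assoc,
      neg_one_sq_pow, one_mul]
  rw [Finset.sum_congr rfl hHook, sum_tri, ← newton k hk]
  apply Finset.sum_congr rfl
  intro c hc
  rw [← natCast_zsmul, smul_smul, mul_comm]

lemma C_eval (K : ℕ) :
    ∑ i ∈ range (K+1), (-1:ℤ)^i • (hfun (K+1-i) * esymmF (i+1))
      = hfun (K+2) + (-1:ℤ)^(K+2) • esymmF (K+2) := by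
  have hP := P1 (K+2)
  rw [if_neg (by omega), Finset.sum_range_succ, Finset.sum_range_succ'] at hP
  rw [show K+2-(K+2) = 0 by omega, hfun_zero, one_mul] at hP
  -- hP : (∑ i ∈ range (K+1), (-1)^(i+1) • (hfun (K+2-(i+1)) * e (i+1)) + 1 • (hfun (K+2-0) * e 0))
  --      + (-1)^(K+2) • e (K+2) = 0
  have hterm : ∀ i ∈ range (K+1), (-1:ℤ)^(i+1) • (hfun (K+2-(i+1)) * esymmF (i+1))
      = -((-1:ℤ)^i • (hfun (K+1-i) * esymmF (i+1))) := by
    intro i hi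
    rw [show K+2-(i+1) = K+1-i by omega, pow_succ]
    module
  rw [Finset.sum_congr rfl hterm, Finset.sum_neg_distrib] at hP
  rw [show K+2-0 = K+2 by omega, esymmF_zero, mul_one, pow_zero, one_smul] at hP
  have hsub : (∑ i ∈ range (K+1), (-1:ℤ)^i • (hfun (K+1-i) * esymmF (i+1)))
      - (hfun (K+2) + (-1:ℤ)^(K+2) • esymmF (K+2))
      = -(-(∑ i ∈ range (K+1), (-1:ℤ)^i • (hfun (K+1-i) * esymmF (i+1)))
          + hfun (K+2) + (-1:ℤ)^(K+2) • esymmF (K+2)) := by abel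
  rw [hP, neg_zero] at hsub
  exact sub_eq_zero.mp hsub

lemma Hook1_eval (K : ℕ) : Hook 1 (K+1) = esymmF (K+2) := by
  have hP := P1 (K+2)
  rw [if_neg (by omega), Finset.sum_range_succ] at hP
  rw [show K+2-(K+2) = 0 by omega, hfun_zero, one_mul] at hP
  have hA : ∑ t ∈ range (K+2), (-1:ℤ)^t • (hfun (K+2-t) * esymmF t)
      = -((-1:ℤ)^(K+2) • esymmF (K+2)) := by
    calc ∑ t ∈ range (K+2), (-1:ℤ)^t • (hfun (K+2-t) * esymmF t)
        = (∑ t ∈ range (K+2), (-1:ℤ)^t • (hfun (K+2-t) * esymmF t)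
            + (-1:ℤ)^(K+2) • esymmF (K+2)) - (-1:ℤ)^(K+2) • esymmF (K+2) := by abel
      _ = -((-1:ℤ)^(K+2) • esymmF (K+2)) := by rw [hP]; abel
  rw [hook_reflect 1 (K+1)]
  have hconv : ∑ t ∈ range (K+2), (-1:ℤ)^t • (hfun (1 + (K+1-t)) * esymmF t)
      = ∑ t ∈ range (K+2), (-1:ℤ)^t • (hfun (K+2-t) * esymmF t) := by
    apply Finset.sum_congr rfl
    intro t ht
    rw [Finset.mem_range] at ht
    rw [show 1 + (K+1-t) = K+2-t by omega]
  rw [hconv, hA, smul_neg, smul_smul, show (-1:ℤ)^(K+1) * (-1)^(K+2) = -1 by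
    rw [pow_succ (-1:ℤ) (K+1), ← mul_assoc, neg_one_sq_pow]; ring]
  rw [neg_one_smul]
  abel

lemma hookSum1 (K : ℕ) :
    ∑ i ∈ range (K+1), (-1:ℤ)^i • Hook (K+1-i) (i+1) = hfun (K+2) - psumF (K+2) := by
  have hterm : ∀ i ∈ range (K+1), (-1:ℤ)^i • Hook (K+1-i) (i+1)
      = (-1:ℤ)^i • (hfun (K+1-i) * esymmF (i+1)) - (-1:ℤ)^i • Hook (K+2-i) i := by
    intro i hi
    rw [Finset.mem_range] at hi
    rw [Hook_succ (K+1-i) i, show (K+1-i)+1 = K+2-i by omega, smul_sub]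
  rw [Finset.sum_congr rfl hterm, Finset.sum_sub_distrib, C_eval]
  have hU := U_eval (K+2) (by omega)
  rw [Finset.sum_range_succ, show K+2-(K+1) = 1 by omega] at hU
  -- hU : Σ_{i∈range (K+1)} (-1)^i • Hook (K+2-i) i + (-1)^(K+1) • Hook 1 (K+1) = psum
  have hU' : ∑ i ∈ range (K+1), (-1:ℤ)^i • Hook (K+2-i) i
      = psumF (K+2) - (-1:ℤ)^(K+1) • esymmF (K+2) := by
    rw [← hU, Hook1_eval]
    abel
  rw [hU']
  have hsign : (-1:ℤ)^(K+2) • esymmF (K+2) + (-1:ℤ)^(K+1) • esymmF (K+2) = 0 := by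
    rw [show (-1:ℤ)^(K+2) = -(-1:ℤ)^(K+1) by rw [pow_succ]; ring, neg_smul]
    abel
  calc hfun (K+2) + (-1:ℤ)^(K+2) • esymmF (K+2)
        - (psumF (K+2) - (-1:ℤ)^(K+1) • esymmF (K+2))
      = hfun (K+2) - psumF (K+2)
        + ((-1:ℤ)^(K+2) • esymmF (K+2) + (-1:ℤ)^(K+1) • esymmF (K+2)) := by abel
    _ = hfun (K+2) - psumF (K+2) := by rw [hsign, add_zero]

/-! ### evaluation of the second sum -/

noncomputable def ez (n : ℤ) : SymFn := if 0 ≤ n then esymmF n.toNat else 0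

lemma ez_natCast (b : ℕ) : ez (b : ℤ) = esymmF b := by
  rw [ez, if_pos (Int.natCast_nonneg b), Int.toNat_natCast]

lemma ez_neg {n : ℤ} (h : n < 0) : ez n = 0 := if_neg (by omega)

lemma InnerEval0 (K : ℕ) :
    ∑ i ∈ range (K+1), (-1:ℤ)^i • (hfun (K-i) * esymmF (i+1)) = hfun (K+1) := by
  have hP := P1 (K+1)
  rw [if_neg (by omega), Finset.sum_range_succ'] at hP
  have hterm : ∀ i ∈ range (K+1), (-1:ℤ)^(i+1) • (hfun (K+1-(i+1)) * esymmF (i+1))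
      = -((-1:ℤ)^i • (hfun (K-i) * esymmF (i+1))) := by
    intro i hi
    rw [show K+1-(i+1) = K-i by omega, pow_succ]
    module
  rw [Finset.sum_congr rfl hterm, Finset.sum_neg_distrib, pow_zero, one_smul,
    show K+1-0 = K+1 by omega, esymmF_zero, mul_one] at hP
  have hsub : (∑ i ∈ range (K+1), (-1:ℤ)^i • (hfun (K-i) * esymmF (i+1))) - hfun (K+1)
      = -(-(∑ i ∈ range (K+1), (-1:ℤ)^i • (hfun (K-i) * esymmF (i+1))) + hfun (K+1)) := by
    abel
  rw [hP, neg_zero] at hsub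
  exact sub_eq_zero.mp hsub

lemma InnerEvalPos (K j : ℕ) (h1 : 1 ≤ j) (h2 : j ≤ K+1) :
    ∑ i ∈ range (K+1), (-1:ℤ)^i • (hfun (K-i) * ez ((i:ℤ)+1-j))
      = (-1:ℤ)^(j-1) • (if K+1-j = 0 then (1:SymFn) else 0) := by
  have hsub : Finset.Ico (j-1) (K+1) ⊆ range (K+1) := by
    rw [Finset.range_eq_Ico]
    exact Finset.Ico_subset_Ico (Nat.zero_le _) le_rfl
  rw [← Finset.sum_subset hsub (fun x hx1 hx2 => by
    rw [Finset.mem_range] at hx1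
    have h4 : ¬(j-1 ≤ x ∧ x < K+1) := by simpa [Finset.mem_Ico] using hx2
    have hxlt : x < j - 1 := by omega
    rw [ez_neg (by omega : ((x:ℤ)+1-j) < 0), mul_zero, smul_zero])]
  rw [Finset.sum_Ico_eq_sum_range]
  have hterm : ∀ t ∈ range (K+1-(j-1)),
      (-1:ℤ)^(j-1+t) • (hfun (K-(j-1+t)) * ez ((((j-1+t:ℕ)):ℤ)+1-j))
      = (-1:ℤ)^(j-1) • ((-1:ℤ)^t • (hfun ((K+1-j)-t) * esymmF t)) := by
    intro t ht
    rw [Finset.mem_range] at ht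
    rw [show ((((j-1+t:ℕ)):ℤ)+1-j) = ((t:ℕ):ℤ) by omega, ez_natCast,
      show K-(j-1+t) = (K+1-j)-t by omega, pow_add, ← smul_smul]
  rw [Finset.sum_congr rfl hterm, ← Finset.smul_sum]
  congr 1
  rw [show K+1-(j-1) = (K+1-j)+1 by omega]
  exact P1 (K+1-j)

lemma T2_eval (K : ℕ) :
    ∑ i ∈ range (K+1), (-1:ℤ)^i • (hfun (K-i) * Hook (K+2) (i+1))
      = hfun (K+2) * hfun (K+1) - hfun (2*K+3) := by
  have shuffle : ∀ (c d : ℤ) (x y z : SymFn),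
      c • (x * (d • (y * z))) = d • (y * (c • (x * z))) := by
    intros c d x y z
    rw [mul_smul_comm, smul_smul, mul_smul_comm, smul_smul, mul_comm c d, mul_left_comm]
  have hstep1 : ∀ i ∈ range (K+1), (-1:ℤ)^i • (hfun (K-i) * Hook (K+2) (i+1))
      = ∑ j ∈ range (K+2),
          (-1:ℤ)^j • (hfun (K+2+j) * ((-1:ℤ)^i • (hfun (K-i) * ez ((i:ℤ)+1-j)))) := by
    intro i hi
    rw [Finset.mem_range] at hi
    rw [Hook, Finset.mul_sum, Finset.smul_sum]
    have hconv : ∀ j ∈ range (i+2),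
        (-1:ℤ)^i • (hfun (K-i) * ((-1:ℤ)^j • (hfun ((K+2)+j) * esymmF (i+1-j))))
          = (-1:ℤ)^j • (hfun (K+2+j) * ((-1:ℤ)^i • (hfun (K-i) * ez ((i:ℤ)+1-j)))) := by
      intro j hj
      rw [Finset.mem_range] at hj
      rw [show ((i:ℤ)+1-(j:ℕ)) = ((i+1-j : ℕ) : ℤ) by omega, ez_natCast]
      exact shuffle _ _ _ _ _
    rw [Finset.sum_congr rfl hconv]
    apply Finset.sum_subset
      (show range (i+2) ⊆ range (K+2) from Finset.range_subset_range.mpr (by omega))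
    intro j hj hnj
    have hij : i+1 < j := by
      rw [Finset.mem_range] at hj hnj
      omega
    rw [ez_neg (by omega : ((i:ℤ)+1-(j:ℕ)) < 0), mul_zero, smul_zero, mul_zero, smul_zero]
  rw [Finset.sum_congr rfl hstep1, Finset.sum_comm]
  have hpull : ∀ j ∈ range (K+2),
      (∑ i ∈ range (K+1),
        (-1:ℤ)^j • (hfun (K+2+j) * ((-1:ℤ)^i • (hfun (K-i) * ez ((i:ℤ)+1-j)))))
        = (-1:ℤ)^j •
            (hfun (K+2+j) * ∑ i ∈ range (K+1), (-1:ℤ)^i • (hfun (K-i) * ez ((i:ℤ)+1-j))) := by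
    intro j _
    rw [Finset.mul_sum, Finset.smul_sum]
  rw [Finset.sum_congr rfl hpull]
  have hsub2 : ({0, K+1} : Finset ℕ) ⊆ range (K+2) := by
    intro x hx
    rw [Finset.mem_insert, Finset.mem_singleton] at hx
    rw [Finset.mem_range]
    omega
  rw [← Finset.sum_subset hsub2 (fun j hj hnj => by
    rw [Finset.mem_range] at hj
    rw [Finset.mem_insert, Finset.mem_singleton] at hnj
    push_neg at hnj
    rw [InnerEvalPos K j (by omega) (by omega), if_neg (by omega), smul_zero, mul_zero,
      smul_zero])]
  rw [Finset.sum_pair (by omega : (0:ℕ) ≠ K+1)]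
  have hI0 : (∑ i ∈ range (K+1), (-1:ℤ)^i • (hfun (K-i) * ez ((i:ℤ)+1-((0:ℕ):ℤ))))
      = hfun (K+1) := by
    rw [Finset.sum_congr rfl (fun i _ => by
      rw [show ((i:ℤ)+1-((0:ℕ):ℤ)) = ((i+1:ℕ):ℤ) by push_cast; ring, ez_natCast])]
    exact InnerEval0 K
  have hIK : (∑ i ∈ range (K+1), (-1:ℤ)^i • (hfun (K-i) * ez ((i:ℤ)+1-((K+1:ℕ):ℤ))))
      = (-1:ℤ)^K • (1:SymFn) := by
    rw [InnerEvalPos K (K+1) (by omega) le_rfl, show (K+1)-1 = K by omega,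
      if_pos (by omega : K+1-(K+1) = 0)]
  rw [hI0, hIK]
  rw [pow_zero, one_smul, mul_smul_comm, mul_one, smul_smul,
    show (-1:ℤ)^(K+1) * (-1)^K = -1 by linear_combination (-1:ℤ) * neg_one_sq_pow K,
    neg_one_smul, show K+2+0 = K+2 by omega, show K+2+(K+1) = 2*K+3 by omega]
  abel

lemma sorted_replicate (n : ℕ) : (List.replicate n (1:ℕ)).Pairwise (· ≥ ·) := by
  induction n with
  | zero => simp
  | succ n ih =>
    rw [List.replicate_succ, List.pairwise_cons]
    exact ⟨fun b hb => by rw [List.eq_of_mem_replicate hb], ih⟩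

lemma getD_replicate' (n t : ℕ) (h : t < n) : (List.replicate n (1:ℕ)).getD t 0 = 1 := by
  rw [List.getD_eq_getElem _ _ (by simpa using h)]
  simp

lemma schur_shape (K i : ℕ) (hi : i ≤ K) :
    schur (ofList ((K+1) :: (K+1-i) :: List.replicate (i+1) 1)) =
      hfun (K+1) * Hook (K+1-i) (i+1) - hfun (K-i) * Hook (K+2) (i+1) := by
  set L := (K+1) :: (K+1-i) :: List.replicate (i+1) 1 with hL
  have hsorted : L.Pairwise (· ≥ ·) := by
    rw [hL, List.pairwise_cons, List.pairwise_cons]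
    refine ⟨?_, ?_, sorted_replicate (i+1)⟩
    · intro b hb
      rw [List.mem_cons] at hb
      rcases hb with rfl | hb
      · omega
      · rw [List.eq_of_mem_replicate hb]; omega
    · intro b hb
      rw [List.eq_of_mem_replicate hb]; omega
  have hpos : ∀ x ∈ L, 0 < x := by
    intro x hx
    rw [hL, List.mem_cons, List.mem_cons] at hx
    rcases hx with rfl | rfl | hx
    · omega
    · omega
    · rw [List.eq_of_mem_replicate hx]; omega
  have hlen : length (ofList L) = i + 3 := by
    rw [ofList_length L hsorted hpos, hL]
    simp [List.length_replicate]
  have hparts := ofList_parts L hsorted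
  rw [schur_eq_jt, hlen]
  have hcongr : jt (ofList L).parts (i+3)
      = jt (fun r => if r = 0 then K+1 else if r = 1 then K+1-i else 1) (i+3) := by
    apply jt_congr
    intro r hr
    rw [hparts r]
    match r with
    | 0 => rfl
    | 1 => rfl
    | (r+2) =>
      rw [hL]
      show (List.replicate (i+1) 1).getD r 0 = _
      rw [getD_replicate' (i+1) r (by omega)]
      rfl
  rw [hcongr]
  rw [det_jt_expand (fun r => if r = 0 then K+1 else if r = 1 then K+1-i else 1)
    (fun r => if r = 0 then K+1-i else 1) (fun r => if r = 0 then K+2 else 1) (i+1)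
    (fun r hr => by beta_reduce; rw [if_neg (by omega), if_neg (by omega)])
    (fun r hr => by
      beta_reduce
      match r with
      | 0 => rfl
      | (r+1) => rw [if_neg (by omega), if_neg (by omega : ¬ r+1+1 = 0), if_neg (by omega)])
    (by show K+2 = (K+1) + 1; omega)
    (fun r hr1 hr2 => by
      beta_reduce
      rw [if_neg (by omega), if_neg (by omega : ¬ r+1 = 0), if_neg (by omega)])]
  show hfun (K+1) * (hookM (K+1-i) (i+1)).det
      - hz (((K+1-i : ℕ):ℤ) - 1) * (hookM (K+2) (i+1)).det = _
  rw [(main_det (i+1)).2 (K+1-i), (main_det (i+1)).2 (K+2),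
    show ((K+1-i : ℕ):ℤ) - 1 = ((K-i : ℕ):ℤ) by omega, hz_natCast]


/-- Liu–Polo, second identity: for `k ≥ 2`,
`Σ_{λ ⊢ 2k-1, λ ⊴ (k-1,k-1,1)} m_λ = Σ_{i=0}^{k-2} (-1)^i s_{(k-1,k-1-i,1^{i+1})}`. -/
theorem liu_polo_two (k : ℕ) (hk : 2 ≤ k) :
    ∑ᶠ l ∈ {l : Partition | psize l = 2*k-1 ∧ Dominates (ofList [k-1, k-1, 1]) l}, msym l =
      ∑ i ∈ Finset.range (k-1),
        ((-1 : ℤ) ^ i) • schur (ofList ((k-1) :: (k-1-i) :: List.replicate (i+1) 1)) := by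
  obtain ⟨K, rfl⟩ : ∃ K, k = K + 2 := ⟨k - 2, by omega⟩
  rw [lhs_eval (K+2) hk, G_decomp (K+2) hk]
  rw [show 2*(K+2)-1 = 2*K+3 by omega, show K+2-1 = K+1 by omega]
  have hsum : ∑ i ∈ range (K+1),
      (-1:ℤ)^i • schur (ofList ((K+1) :: (K+1-i) :: List.replicate (i+1) 1))
      = hfun (K+1) * (∑ i ∈ range (K+1), (-1:ℤ)^i • Hook (K+1-i) (i+1))
        - ∑ i ∈ range (K+1), (-1:ℤ)^i • (hfun (K-i) * Hook (K+2) (i+1)) := by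
    calc ∑ i ∈ range (K+1),
        (-1:ℤ)^i • schur (ofList ((K+1) :: (K+1-i) :: List.replicate (i+1) 1))
        = ∑ i ∈ range (K+1), (hfun (K+1) * ((-1:ℤ)^i • Hook (K+1-i) (i+1))
            - (-1:ℤ)^i • (hfun (K-i) * Hook (K+2) (i+1))) := by
          apply Finset.sum_congr rfl
          intro i hi
          rw [Finset.mem_range] at hi
          rw [schur_shape K i (by omega), smul_sub, mul_smul_comm]
      _ = _ := by rw [Finset.sum_sub_distrib, ← Finset.mul_sum]
  rw [hsum, hookSum1 K, T2_eval K]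
  ring

end Petrie
end
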